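/- arXiv:2412.17648 — 2 statements merged into one kernel-verified Lean document; each statement's English description precedes it below -/
import Mathlib

section
/- If G is a word-representable graph and b is a vertex of G such that the subgraph induced by the neighborhood N_G(b) contains an induced subgraph that is not a comparability graph, then considering the graph G₁ induced on N_G(b) ∪ {b}, G₁ is word-representable only if G[N_G(b)] is a comparability graph. In particular, in any word-representable graph, the neighborhood of every vertex induces a comparability graph. -/
section Defs

variable {V : Type*}

/-- Two letters alternate in a word: the subword over `{a,b}` has no equal consecutive letters. -/
def Alternates [DecidableEq V] (w : List V) (a b : V) : Prop :=
  (w.filter (fun x => decide (x = a ∨ x = b))).Chain' (· ≠ ·)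

/-- A word over the vertex set represents a graph: every vertex occurs, and two distinct
vertices are adjacent iff they alternate in the word. -/
def Represents [DecidableEq V] (w : List V) (G : SimpleGraph V) : Prop :=
  (∀ v : V, v ∈ w) ∧ ∀ a b : V, a ≠ b → (G.Adj a b ↔ Alternates w a b)

def WordRepresentable [DecidableEq V] (G : SimpleGraph V) : Prop :=
  ∃ w : List V, Represents w G

/-- Every letter occurs exactly `k` times. -/
def IsKUniform [DecidableEq V] (w : List V) (k : ℕ) : Prop :=
  ∀ v : V, w.count v = k

/-- `k` is the representation number of `G`. -/
def RepNumIs [DecidableEq V] (G : SimpleGraph V) (k : ℕ) : Prop :=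
  IsLeast {n : ℕ | ∃ w : List V, IsKUniform w n ∧ Represents w G} k

/-- `p` is a permutation of the vertex set (as a list). -/
def IsPermOn (p : List V) : Prop := p.Nodup ∧ ∀ v : V, v ∈ p

/-- `G` is representable by a concatenation of `k` permutations of its vertex set. -/
def PermRepresents [DecidableEq V] (G : SimpleGraph V) (k : ℕ) : Prop :=
  ∃ ps : List (List V), ps.length = k ∧ (∀ p ∈ ps, IsPermOn p) ∧ Represents ps.flatten G

/-- `k` is the permutation-representation number of `G`. -/
def PrnIs [DecidableEq V] (G : SimpleGraph V) (k : ℕ) : Prop :=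
  IsLeast {n : ℕ | PermRepresents G n} k

/-- A comparability graph: a graph admitting a transitive orientation of its edges. -/
def IsComparability (G : SimpleGraph V) : Prop :=
  ∃ lt : V → V → Prop, Transitive lt ∧ (∀ a b, lt a b → G.Adj a b) ∧
    (∀ a b, G.Adj a b → (lt a b ↔ ¬ lt b a))

/-- A module: every outside vertex is adjacent to all of `M` or to none of `M`. -/
def IsModule (G : SimpleGraph V) (M : Set V) : Prop :=
  ∀ x ∉ M, (∀ m ∈ M, G.Adj x m) ∨ (∀ m ∈ M, ¬ G.Adj x m)

end Defs

/-- The graph obtained from `G` by replacing the vertex `a` with the module `M`. -/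
def substGraph {W V' : Type*} (G : SimpleGraph W) (a : W) (M : SimpleGraph V') :
    SimpleGraph ({x : W // x ≠ a} ⊕ V') where
  Adj x y :=
    match x, y with
    | Sum.inl u, Sum.inl v => G.Adj u.1 v.1
    | Sum.inl u, Sum.inr _ => G.Adj u.1 a
    | Sum.inr _, Sum.inl v => G.Adj a v.1
    | Sum.inr u, Sum.inr v => M.Adj u v
  symm := by
    constructor
    rintro (u | u) (v | v) h
    · exact h.symm
    · exact h.symm
    · exact h.symm
    · exact h.symm
  loopless := by
    constructor
    rintro (u | u) h
    · exact G.loopless.irrefl _ h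
    · exact M.loopless.irrefl _ h

/-- The quotient graph of a modular partition: parts are adjacent iff completely adjacent. -/
def quotientGraph {V : Type*} (G : SimpleGraph V) {n : ℕ} (Mod : Fin n → Set V) :
    SimpleGraph (Fin n) where
  Adj i j := i ≠ j ∧ ∀ a ∈ Mod i, ∀ b ∈ Mod j, G.Adj a b
  symm := by
    constructor
    rintro i j ⟨hij, h⟩
    exact ⟨hij.symm, fun a ha b hb => (h b hb a ha).symm⟩
  loopless := by constructor; rintro i ⟨h, _⟩; exact h rfl

/-- The lexicographical product of two graphs. -/
def lexProd {V V' : Type*} (G : SimpleGraph V) (G' : SimpleGraph V') :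
    SimpleGraph (V × V') where
  Adj x y := G.Adj x.1 y.1 ∨ (x.1 = y.1 ∧ G'.Adj x.2 y.2)
  symm := by
    constructor
    rintro ⟨a, a'⟩ ⟨b, b'⟩ (h | ⟨h1, h2⟩)
    · exact Or.inl h.symm
    · exact Or.inr ⟨h1.symm, h2.symm⟩
  loopless := by
    constructor
    rintro ⟨a, a'⟩ (h | ⟨_, h⟩)
    · exact G.loopless.irrefl _ h
    · exact G'.loopless.irrefl _ h

set_option linter.unusedSectionVars false
set_option maxHeartbeats 1000000

namespace S5X

variable {α : Type*} [DecidableEq α]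

def pp (a c : α) : α → Bool := fun t => decide (t = a ∨ t = c)
def ppp (a c e : α) : α → Bool := fun t => decide (t = a ∨ t = c ∨ t = e)

lemma pp_left (a c : α) : pp a c a = true := by simp [pp]
lemma pp_right (a c : α) : pp a c c = true := by simp [pp]
lemma mem_of_pp {a c t : α} (h : pp a c t = true) : t = a ∨ t = c := by simpa [pp] using h

inductive ABW (b p : α) : List α → Prop
  | base : ABW b p [b]
  | step {l : List α} : ABW b p l → ABW b p (b :: p :: l)

inductive PBW (b p q : α) : List α → Prop
  | base : PBW b p q [b]
  | step {l : List α} : PBW b p q l → PBW b p q (b :: p :: q :: l)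

lemma ABW.head?_eq {b p : α} {l : List α} (h : ABW b p l) : l.head? = some b := by
  cases h <;> rfl

lemma PBW.head?_eq {b p q : α} {l : List α} (h : PBW b p q l) : l.head? = some b := by
  cases h <;> rfl

lemma ABW.b_mem {b p : α} {l : List α} (h : ABW b p l) : b ∈ l := by
  cases h <;> simp

lemma not_mem_of_filter {P : α → Bool} {l : List α} {x : α} (h : l.filter P = [])
    (hx : P x = true) : x ∉ l := by
  intro hm
  have := List.mem_filter.mpr ⟨hm, hx⟩
  rw [h] at this
  simp at this

lemma nil_of_head_b {b : α} {f t r : List α} (hbf : b ∉ f) (he : f ++ b :: t = b :: r) :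
    f = [] ∧ t = r := by
  match f, he with
  | [], he => exact ⟨rfl, by simpa using he⟩
  | a :: f', he =>
    have : a = b := by simpa using congrArg List.head? he
    exact absurd (this ▸ (List.mem_cons_self (a := a) (l := f'))) hbf

lemma match_one {b p : α} {f t l : List α} (hbf : b ∉ f) (hpb : p ≠ b)
    (he : f ++ b :: t = p :: l) (hh : l.head? = some b) : f = [p] ∧ l = b :: t := by
  match f, he with
  | [], he =>
    have : b = p := by simpa using congrArg List.head? he
    exact absurd this.symm hpb
  | [a], he =>
    simp only [List.cons_append, List.nil_append, List.cons.injEq] at he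
    exact ⟨by rw [he.1], he.2.symm⟩
  | a₁ :: a₂ :: f', he =>
    simp only [List.cons_append, List.cons.injEq] at he
    have h2 : l.head? = some a₂ := by rw [← he.2]; rfl
    have : a₂ = b := by rw [h2] at hh; injection hh
    exact absurd (by simp [this]) hbf

lemma match_two {b p q : α} {f t l : List α} (hbf : b ∉ f) (hpb : p ≠ b) (hqb : q ≠ b)
    (he : f ++ b :: t = p :: q :: l) (hh : l.head? = some b) : f = [p, q] ∧ l = b :: t := by
  match f, he with
  | [], he =>
    have : b = p := by simpa using congrArg List.head? he
    exact absurd this.symm hpb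
  | [a], he =>
    simp only [List.cons_append, List.nil_append, List.cons.injEq] at he
    exact absurd he.2.1.symm hqb
  | [a₁, a₂], he =>
    simp only [List.cons_append, List.nil_append, List.cons.injEq] at he
    exact ⟨by rw [he.1, he.2.1], he.2.2.symm⟩
  | a₁ :: a₂ :: a₃ :: f', he =>
    simp only [List.cons_append, List.cons.injEq] at he
    have h2 : l.head? = some a₃ := by rw [← he.2.2]; rfl
    have : a₃ = b := by rw [h2] at hh; injection hh
    exact absurd (by simp [this]) hbf

lemma filter_congr_not_mem {x y b : α} (l : List α) (hb : b ∉ l) :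
    l.filter (ppp x y b) = l.filter (pp x y) :=
  List.filter_congr (fun t ht => by
    have : t ≠ b := fun h => hb (h ▸ ht)
    simp [pp, ppp, this])

lemma filter_swap_absent {x y b : α} {l : List α} (hx : x ∉ l) (hb : b ∉ l) :
    l.filter (pp x y) = l.filter (pp y b) :=
  List.filter_congr fun t ht => by
    have h1 : t ≠ x := fun h => hx (h ▸ ht)
    have h2 : t ≠ b := fun h => hb (h ▸ ht)
    simp [pp, h1, h2]

lemma filter_swap_absent' {x y b : α} {l : List α} (hy : y ∉ l) (hb : b ∉ l) :
    l.filter (pp x y) = l.filter (pp x b) :=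
  List.filter_congr fun t ht => by
    have h1 : t ≠ y := fun h => hy (h ▸ ht)
    have h2 : t ≠ b := fun h => hb (h ▸ ht)
    simp [pp, h1, h2]

lemma micro_merge {x y b : α} (hxy : x ≠ y) (hxb : x ≠ b) (hyb : y ≠ b) :
    ∀ (s : List α), b ∉ s → s.filter (pp x b) = [x] → s.filter (pp y b) = [y] →
      s.filter (pp x y) = [x, y] ∨ s.filter (pp x y) = [y, x] := by
  intro s
  induction s with
  | nil => intro _ h; simp at h
  | cons a t ih =>
    intro hb hx hy
    have hbt : b ∉ t := fun h => hb (by simp [h])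
    have hab : a ≠ b := fun h => hb (by simp [h])
    by_cases hax : a = x
    · subst hax
      rw [List.filter_cons_of_pos (pp_left _ _)] at hx
      have hx' : t.filter (pp a b) = [] := by injection hx
      have hat : a ∉ t := not_mem_of_filter hx' (pp_left _ _)
      rw [List.filter_cons_of_neg (by simp [pp, hxy, hab])] at hy
      left
      rw [List.filter_cons_of_pos (pp_left _ _), filter_swap_absent hat hbt, hy]
    · by_cases hay : a = y
      · subst hay
        rw [List.filter_cons_of_pos (pp_left _ _)] at hy
        have hy' : t.filter (pp a b) = [] := by injection hy
        have hat : a ∉ t := not_mem_of_filter hy' (pp_left _ _)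
        rw [List.filter_cons_of_neg (by simp [pp, hax, hab])] at hx
        right
        rw [List.filter_cons_of_pos (pp_right _ _), filter_swap_absent' hat hbt, hx]
      · rw [List.filter_cons_of_neg (by simp [pp, hax, hab])] at hx
        rw [List.filter_cons_of_neg (by simp [pp, hay, hab])] at hy
        rw [List.filter_cons_of_neg (by simp [pp, hax, hay])]
        exact ih hbt hx hy

lemma compose {x y z : α} (hxy : x ≠ y) (hyz : y ≠ z) (hxz : x ≠ z) :
    ∀ (s : List α), s.filter (pp x y) = [x, y] → s.filter (pp y z) = [y, z] →
      s.filter (pp x z) = [x, z] := by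
  intro s
  induction s with
  | nil => intro h; simp at h
  | cons a t ih =>
    intro h1 h2
    by_cases hay : a = y
    · subst hay
      rw [List.filter_cons_of_pos (pp_right _ _)] at h1
      have : a = x := by injection h1
      exact absurd this.symm hxy
    · by_cases hax : a = x
      · subst hax
        rw [List.filter_cons_of_pos (pp_left _ _)] at h1
        have h1' : t.filter (pp a y) = [y] := by injection h1
        have hat : a ∉ t := by
          intro hm
          have := List.mem_filter.mpr ⟨hm, pp_left a y⟩
          rw [h1'] at this
          simp at this
          exact hxy this
        rw [List.filter_cons_of_neg (by simp [pp, hay, hxz])] at h2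
        rw [List.filter_cons_of_pos (pp_left _ _)]
        have key : t.filter (pp a z) = (t.filter (pp y z)).filter (pp a z) := by
          rw [List.filter_filter]
          apply List.filter_congr
          intro u hu
          by_cases hua : u = a
          · exact absurd (hua ▸ hu) hat
          · by_cases huz : u = z
            · simp [pp, hua, huz]
            · simp [pp, hua, huz]
        rw [key, h2]
        rw [List.filter_cons_of_neg (by simp [pp, Ne.symm hxy, hyz]),
          List.filter_cons_of_pos (pp_right _ _)]
        simp
      · by_cases haz : a = z
        · subst haz
          rw [List.filter_cons_of_pos (pp_right _ _)] at h2
          have : a = y := by injection h2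
          exact absurd this.symm hyz
        · rw [List.filter_cons_of_neg (by simp [pp, hax, hay])] at h1
          rw [List.filter_cons_of_neg (by simp [pp, hay, haz])] at h2
          rw [List.filter_cons_of_neg (by simp [pp, hax, haz])]
          exact ih h1 h2

lemma abw_of_alt {b p : α} (hpb : p ≠ b) :
    ∀ (n : ℕ) (l : List α), l.length ≤ n → (∀ t ∈ l, t = p ∨ t = b) → l.Chain' (· ≠ ·) →
      l.head? = some b → l.getLast? = some b → ABW b p l := by
  intro n
  induction n with
  | zero =>
    intro l hlen hel hch hh hl
    rcases l with _ | ⟨a, rest⟩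
    · simp at hh
    · simp at hlen
  | succ n ih =>
    intro l hlen hel hch hh hl
    rcases l with _ | ⟨b', rest⟩
    · simp at hh
    · have hb' : b' = b := by simpa using hh
      subst b'
      rcases rest with _ | ⟨t, rest'⟩
      · exact ABW.base
      · have htb : t ≠ b := fun h => (List.isChain_cons_cons.mp hch).1 h.symm
        have htp : t = p := (hel t (by simp)).resolve_right htb
        subst t
        rcases rest' with _ | ⟨u, rest''⟩
        · have : p = b := by simpa using hl
          exact absurd this hpb
        · have hu : u = b := by
            have h1 : p ≠ u := (List.isChain_cons_cons.mp (List.isChain_cons_cons.mp hch).2).1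
            rcases hel u (by simp) with h | h
            · exact absurd h.symm h1
            · exact h
          subst u
          apply ABW.step
          apply ih (b :: rest'')
          · simp only [List.length_cons] at hlen ⊢
            omega
          · intro v hv
            apply hel v
            simp only [List.mem_cons] at hv ⊢
            tauto
          · exact hch.tail.tail
          · rfl
          · rw [List.getLast?_cons_cons, List.getLast?_cons_cons] at hl
            exact hl

end S5X

namespace S5X

variable {α : Type*} [DecidableEq α]

lemma mem_of_ppp {a c e t : α} (h : ppp a c e t = true) : t = a ∨ t = c ∨ t = e := by
  simpa [ppp] using h

lemma split_first {b : α} : ∀ {l : List α}, b ∈ l → ∃ s t, l = s ++ b :: t ∧ b ∉ s := by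
  intro l hb
  induction l with
  | nil => simp at hb
  | cons a t ih =>
    by_cases hab : a = b
    · exact ⟨[], t, by rw [hab]; rfl, by simp⟩
    · have hbt : b ∈ t := by
        rcases List.mem_cons.mp hb with h | h
        · exact absurd h.symm hab
        · exact h
      obtain ⟨s, t', h1, h2⟩ := ih hbt
      exact ⟨a :: s, t', by rw [h1]; rfl, by simp [h2]; exact fun h => hab h.symm⟩

lemma count_clash {b u v : α} {U : List α} (hub : u ≠ b) (hvb : v ≠ b)
    {l : List α} (h1 : U.filter (pp u b) = [b]) (h2 : U.filter (pp v b) = b :: v :: l)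
    (hbl : b ∈ l) : False := by
  have c1 : List.count b (U.filter (pp u b)) = List.count b U :=
    List.count_filter (by simp [pp])
  have c2 : List.count b (U.filter (pp v b)) = List.count b U :=
    List.count_filter (by simp [pp])
  rw [h1] at c1
  rw [h2] at c2
  have h3 : 0 < List.count b l := List.count_pos_iff.mpr hbl
  have e1 : List.count b [b] = 1 := by simp
  have e2 : List.count b (b :: v :: l) = 1 + List.count b l := by
    simp [List.count_cons, Ne.symm hvb, hvb]
    omega
  omega

lemma lemB {b x y : α} (hxy : x ≠ y) (hxb : x ≠ b) (hyb : y ≠ b) :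
    ∀ (n : ℕ) (U : List α), U.length ≤ n →
      ABW b x (U.filter (pp x b)) → ABW b y (U.filter (pp y b)) →
      (U.filter (pp x y)).Chain' (· ≠ ·) →
      (U.filter (pp x y) = [] ∨ (U.filter (pp x y)).head? = some x) →
      PBW b x y (U.filter (ppp x y b)) := by
  intro n
  induction n with
  | zero =>
    intro U hlen habx _ _ _
    rcases U with _ | ⟨a, t⟩
    · have := habx.head?_eq; simp at this
    · simp at hlen
  | succ n ih =>
    intro U hlen habx haby hch hord
    generalize hFx : U.filter (pp x b) = Fx at habx
    cases habx with
    | base =>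
      generalize hFy : U.filter (pp y b) = Fy at haby
      cases haby with
      | base =>
        have hxU : x ∉ U := by
          intro h
          have := List.mem_filter.mpr ⟨h, pp_left x b⟩
          rw [hFx] at this; simp at this; exact hxb this
        have hyU : y ∉ U := by
          intro h
          have := List.mem_filter.mpr ⟨h, pp_left y b⟩
          rw [hFy] at this; simp at this; exact hyb this
        have heq : U.filter (ppp x y b) = U.filter (pp x b) := by
          apply List.filter_congr
          intro t ht
          have : t ≠ y := fun h => hyU (h ▸ ht)
          simp [pp, ppp, this]
        rw [heq, hFx]
        exact PBW.base
      | @step l2 hl2 =>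
        exact absurd (count_clash hxb hyb hFx hFy hl2.b_mem) not_false
    | @step l hl =>
      generalize hFy : U.filter (pp y b) = Fy at haby
      cases haby with
      | base =>
        exact absurd (count_clash hyb hxb hFy hFx hl.b_mem) not_false
      | @step l2 hl2 =>
        have hbU : b ∈ U := by
          have : b ∈ U.filter (pp x b) := by rw [hFx]; simp
          exact (List.mem_filter.mp this).1
        obtain ⟨s₀, U₁, rfl, hbs₀⟩ := split_first hbU
        have e1 : List.filter (pp x b) s₀ ++ b :: List.filter (pp x b) U₁ = b :: x :: l := by
          rw [← hFx, List.filter_append, List.filter_cons_of_pos (pp_right x b)]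
        obtain ⟨h0x, h1x⟩ := nil_of_head_b (fun hm => hbs₀ (List.mem_filter.mp hm).1) e1
        have e2 : List.filter (pp y b) s₀ ++ b :: List.filter (pp y b) U₁ = b :: y :: l2 := by
          rw [← hFy, List.filter_append, List.filter_cons_of_pos (pp_right y b)]
        obtain ⟨h0y, h1y⟩ := nil_of_head_b (fun hm => hbs₀ (List.mem_filter.mp hm).1) e2
        have hxs₀ : x ∉ s₀ := not_mem_of_filter h0x (pp_left x b)
        have hys₀ : y ∉ s₀ := not_mem_of_filter h0y (pp_left y b)
        have hbU₁ : b ∈ U₁ := by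
          have hbl : b ∈ x :: l := List.mem_cons_of_mem _ hl.b_mem
          rw [← h1x] at hbl
          exact (List.mem_filter.mp hbl).1
        obtain ⟨s₁, U₂, rfl, hbs₁⟩ := split_first hbU₁
        have e3 : List.filter (pp x b) s₁ ++ b :: List.filter (pp x b) U₂ = x :: l := by
          rw [← h1x, List.filter_append, List.filter_cons_of_pos (pp_right x b)]
        obtain ⟨hs₁x, hlx⟩ :=
          match_one (fun hm => hbs₁ (List.mem_filter.mp hm).1) hxb e3 hl.head?_eq
        have e4 : List.filter (pp y b) s₁ ++ b :: List.filter (pp y b) U₂ = y :: l2 := by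
          rw [← h1y, List.filter_append, List.filter_cons_of_pos (pp_right y b)]
        obtain ⟨hs₁y, hly⟩ :=
          match_one (fun hm => hbs₁ (List.mem_filter.mp hm).1) hyb e4 hl2.head?_eq
        have hmm := micro_merge hxy hxb hyb s₁ hbs₁ hs₁x hs₁y
        have hppb : pp x y b = false := by simp [pp, Ne.symm hxb, Ne.symm hyb]
        have h0 : List.filter (pp x y) s₀ = [] := List.filter_eq_nil_iff.mpr (fun a ha hpa => by
          rcases mem_of_pp hpa with rfl | rfl
          exacts [hxs₀ ha, hys₀ ha])
        have hFxy : List.filter (pp x y) (s₀ ++ b :: (s₁ ++ b :: U₂))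
            = List.filter (pp x y) s₁ ++ List.filter (pp x y) U₂ := by
          rw [List.filter_append, h0, List.nil_append,
            List.filter_cons_of_neg (by simp [hppb]), List.filter_append,
            List.filter_cons_of_neg (by simp [hppb])]
        have hs₁xy : List.filter (pp x y) s₁ = [x, y] := by
          rcases hmm with h | h
          · exact h
          · exfalso
            rcases hord with h0' | h0'
            · rw [hFxy, h] at h0'; simp at h0'
            · rw [hFxy, h] at h0'
              simp only [List.cons_append, List.head?_cons, Option.some.injEq] at h0'
              exact hxy h0'.symm
        rw [hFxy, hs₁xy] at hch
        simp only [List.cons_append, List.nil_append] at hch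
        have hrec : PBW b x y (List.filter (ppp x y b) (b :: U₂)) := by
          apply ih (b :: U₂)
          · simp only [List.length_append, List.length_cons] at hlen ⊢
            omega
          · rw [List.filter_cons_of_pos (pp_right x b), ← hlx]
            exact hl
          · rw [List.filter_cons_of_pos (pp_right y b), ← hly]
            exact hl2
          · rw [List.filter_cons_of_neg (by simp [hppb])]
            exact hch.tail.tail
          · rw [List.filter_cons_of_neg (by simp [hppb])]
            rcases hUf : List.filter (pp x y) U₂ with _ | ⟨a, t⟩
            · exact Or.inl rfl
            · right
              have haU : a ∈ List.filter (pp x y) U₂ := by rw [hUf]; simp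
              have ha : a = x ∨ a = y := mem_of_pp (List.mem_filter.mp haU).2
              have hya : y ≠ a := by
                rw [hUf] at hch
                exact (List.isChain_cons_cons.mp (List.isChain_cons_cons.mp hch).2).1
              rcases ha with rfl | rfl
              · rfl
              · exact absurd rfl hya
        have hfinal : List.filter (ppp x y b) (s₀ ++ b :: (s₁ ++ b :: U₂))
            = b :: x :: y :: List.filter (ppp x y b) (b :: U₂) := by
          have g0 : List.filter (ppp x y b) s₀ = [] := List.filter_eq_nil_iff.mpr
            (fun a ha hpa => by
              rcases mem_of_ppp hpa with rfl | rfl | rfl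
              exacts [hxs₀ ha, hys₀ ha, hbs₀ ha])
          have g1 : List.filter (ppp x y b) s₁ = [x, y] := by
            rw [filter_congr_not_mem s₁ hbs₁, hs₁xy]
          rw [List.filter_append, g0, List.nil_append,
            List.filter_cons_of_pos (by simp [ppp]), List.filter_append, g1]
          rfl
        rw [hfinal]
        exact PBW.step hrec

end S5X

namespace S5X

variable {α : Type*} [DecidableEq α]

lemma lemC {b x y z : α} (hxy : x ≠ y) (hyz : y ≠ z) (hxz : x ≠ z)
    (hxb : x ≠ b) (hyb : y ≠ b) (hzb : z ≠ b) :
    ∀ (n : ℕ) (U : List α), U.length ≤ n →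
      PBW b x y (U.filter (ppp x y b)) → PBW b y z (U.filter (ppp y z b)) →
      PBW b x z (U.filter (ppp x z b)) := by
  intro n
  induction n with
  | zero =>
    intro U hlen hPxy _
    rcases U with _ | ⟨a, t⟩
    · have := hPxy.head?_eq; simp at this
    · simp at hlen
  | succ n ih =>
    intro U hlen hPxy hPyz
    generalize hFxy : U.filter (ppp x y b) = Fxy at hPxy
    cases hPxy with
    | base =>
      have hxU : x ∉ U := by
        intro h
        have := List.mem_filter.mpr ⟨h, (by simp [ppp] : ppp x y b x = true)⟩
        rw [hFxy] at this; simp at this; exact hxb this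
      have hyU : y ∉ U := by
        intro h
        have := List.mem_filter.mpr ⟨h, (by simp [ppp] : ppp x y b y = true)⟩
        rw [hFxy] at this; simp at this; exact hyb this
      generalize hFyz : U.filter (ppp y z b) = Fyz at hPyz
      cases hPyz with
      | base =>
        have hzU : z ∉ U := by
          intro h
          have := List.mem_filter.mpr ⟨h, (by simp [ppp] : ppp y z b z = true)⟩
          rw [hFyz] at this; simp at this; exact hzb this
        have heq : U.filter (ppp x z b) = U.filter (ppp x y b) := by
          apply List.filter_congr
          intro t ht
          have h1 : t ≠ z := fun h => hzU (h ▸ ht)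
          have h2 : t ≠ y := fun h => hyU (h ▸ ht)
          simp [ppp, h1, h2]
        rw [heq, hFxy]
        exact PBW.base
      | @step l2 hl2 =>
        exfalso
        have : y ∈ U := by
          have : y ∈ U.filter (ppp y z b) := by rw [hFyz]; simp
          exact (List.mem_filter.mp this).1
        exact hyU this
    | @step l hl =>
      generalize hFyz : U.filter (ppp y z b) = Fyz at hPyz
      cases hPyz with
      | base =>
        exfalso
        have hyU : y ∉ U := by
          intro h
          have := List.mem_filter.mpr ⟨h, (by simp [ppp] : ppp y z b y = true)⟩
          rw [hFyz] at this; simp at this; exact hyb this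
        have : y ∈ U := by
          have : y ∈ U.filter (ppp x y b) := by rw [hFxy]; simp
          exact (List.mem_filter.mp this).1
        exact hyU this
      | @step l2 hl2 =>
        have hb1 : (ppp x y b) b = true := by simp [ppp]
        have hb2 : (ppp y z b) b = true := by simp [ppp]
        have hb3 : (ppp x z b) b = true := by simp [ppp]
        have hbU : b ∈ U := by
          have : b ∈ U.filter (ppp x y b) := by rw [hFxy]; simp
          exact (List.mem_filter.mp this).1
        obtain ⟨s₀, U₁, rfl, hbs₀⟩ := split_first hbU
        have e1 : List.filter (ppp x y b) s₀ ++ b :: List.filter (ppp x y b) U₁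
            = b :: x :: y :: l := by
          rw [← hFxy, List.filter_append, List.filter_cons_of_pos hb1]
        obtain ⟨h0xy, h1xy⟩ := nil_of_head_b (fun hm => hbs₀ (List.mem_filter.mp hm).1) e1
        have e2 : List.filter (ppp y z b) s₀ ++ b :: List.filter (ppp y z b) U₁
            = b :: y :: z :: l2 := by
          rw [← hFyz, List.filter_append, List.filter_cons_of_pos hb2]
        obtain ⟨h0yz, h1yz⟩ := nil_of_head_b (fun hm => hbs₀ (List.mem_filter.mp hm).1) e2
        have hxs₀ : x ∉ s₀ := not_mem_of_filter h0xy (by simp [ppp])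
        have hys₀ : y ∉ s₀ := not_mem_of_filter h0xy (by simp [ppp])
        have hzs₀ : z ∉ s₀ := not_mem_of_filter h0yz (by simp [ppp])
        have hbU₁ : b ∈ U₁ := by
          have hbl : b ∈ x :: y :: l := by
            have : b ∈ l := List.mem_of_mem_head? (by simp [hl.head?_eq])
            simp [this]
          rw [← h1xy] at hbl
          exact (List.mem_filter.mp hbl).1
        obtain ⟨s₁, U₂, rfl, hbs₁⟩ := split_first hbU₁
        have e3 : List.filter (ppp x y b) s₁ ++ b :: List.filter (ppp x y b) U₂
            = x :: y :: l := by
          rw [← h1xy, List.filter_append, List.filter_cons_of_pos hb1]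
        obtain ⟨hs₁xy, hlxy⟩ :=
          match_two (fun hm => hbs₁ (List.mem_filter.mp hm).1) hxb hyb e3 hl.head?_eq
        have e4 : List.filter (ppp y z b) s₁ ++ b :: List.filter (ppp y z b) U₂
            = y :: z :: l2 := by
          rw [← h1yz, List.filter_append, List.filter_cons_of_pos hb2]
        obtain ⟨hs₁yz, hlyz⟩ :=
          match_two (fun hm => hbs₁ (List.mem_filter.mp hm).1) hyb hzb e4 hl2.head?_eq
        have c1 : List.filter (pp x y) s₁ = [x, y] := by
          rw [← filter_congr_not_mem s₁ hbs₁]; exact hs₁xy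
        have c2 : List.filter (pp y z) s₁ = [y, z] := by
          rw [← filter_congr_not_mem s₁ hbs₁]; exact hs₁yz
        have c3 : List.filter (pp x z) s₁ = [x, z] := compose hxy hyz hxz s₁ c1 c2
        have hs₁xz : List.filter (ppp x z b) s₁ = [x, z] := by
          rw [filter_congr_not_mem s₁ hbs₁]; exact c3
        have hrec : PBW b x z (List.filter (ppp x z b) (b :: U₂)) := by
          apply ih (b :: U₂)
          · simp only [List.length_append, List.length_cons] at hlen ⊢
            omega
          · rw [List.filter_cons_of_pos hb1, ← hlxy]
            exact hl
          · rw [List.filter_cons_of_pos hb2, ← hlyz]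
            exact hl2
        have g0 : List.filter (ppp x z b) s₀ = [] := List.filter_eq_nil_iff.mpr
          (fun a ha hpa => by
            rcases mem_of_ppp hpa with rfl | rfl | rfl
            exacts [hxs₀ ha, hzs₀ ha, hbs₀ ha])
        have hfinal : List.filter (ppp x z b) (s₀ ++ b :: (s₁ ++ b :: U₂))
            = b :: x :: z :: List.filter (ppp x z b) (b :: U₂) := by
          rw [List.filter_append, g0, List.nil_append, List.filter_cons_of_pos hb3,
            List.filter_append, hs₁xz]
          rfl
        rw [hfinal]
        exact PBW.step hrec

lemma PBW.filter_chain {b x z : α} (hxz : x ≠ z) (hxb : x ≠ b) (hzb : z ≠ b) :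
    ∀ {l : List α}, PBW b x z l →
      (l.filter (pp x z)).Chain' (· ≠ ·) ∧
        (l.filter (pp x z) = [] ∨ (l.filter (pp x z)).head? = some x) := by
  intro l h
  induction h with
  | base =>
    have hnil : List.filter (pp x z) [b] = [] := by
      simp [pp, Ne.symm hxb, Ne.symm hzb]
    exact ⟨by rw [hnil]; exact List.isChain_nil, Or.inl hnil⟩
  | @step l' h ih =>
    have e : List.filter (pp x z) (b :: x :: z :: l') = x :: z :: List.filter (pp x z) l' := by
      rw [List.filter_cons_of_neg (by simp [pp, Ne.symm hxb, Ne.symm hzb]),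
        List.filter_cons_of_pos (pp_left x z), List.filter_cons_of_pos (pp_right x z)]
    constructor
    · rw [e]
      apply List.isChain_cons_cons.mpr
      refine ⟨hxz, ?_⟩
      rcases hf : List.filter (pp x z) l' with _ | ⟨a, t⟩
      · exact List.isChain_singleton z
      · rcases ih.2 with h0 | h0
        · rw [hf] at h0; simp at h0
        · rw [hf] at h0
          simp only [List.head?_cons, Option.some.injEq] at h0
          subst h0
          apply List.isChain_cons_cons.mpr
          refine ⟨Ne.symm hxz, ?_⟩
          have := ih.1
          rw [hf] at this
          exact this
    · right; rw [e]; rfl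

lemma filter_head_of_head {P : α → Bool} {b : α} {U : List α} (hU : U.head? = some b)
    (hPb : P b = true) : (U.filter P).head? = some b := by
  rcases U with _ | ⟨u, t⟩
  · simp at hU
  · have : u = b := by simpa using hU
    subst u
    rw [List.filter_cons_of_pos hPb]
    rfl

lemma filter_getLast_of_getLast {P : α → Bool} {b : α} {U : List α} (hU : U.getLast? = some b)
    (hPb : P b = true) : (U.filter P).getLast? = some b := by
  rw [← List.head?_reverse, ← List.filter_reverse]
  exact filter_head_of_head (by rw [List.head?_reverse]; exact hU) hPb

lemma mega {b x y z : α} (hxy : x ≠ y) (hyz : y ≠ z) (hxz : x ≠ z)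
    (hxb : x ≠ b) (hyb : y ≠ b) (hzb : z ≠ b)
    {U : List α} (hh : U.head? = some b) (hl : U.getLast? = some b) (hx : x ∈ U)
    (axb : (U.filter (pp x b)).Chain' (· ≠ ·))
    (ayb : (U.filter (pp y b)).Chain' (· ≠ ·))
    (azb : (U.filter (pp z b)).Chain' (· ≠ ·))
    (axy : (U.filter (pp x y)).Chain' (· ≠ ·))
    (ayz : (U.filter (pp y z)).Chain' (· ≠ ·))
    (oxy : (U.filter (pp x y)).head? = some x)
    (oyz : (U.filter (pp y z)).head? = some y) :
    (U.filter (pp x z)).Chain' (· ≠ ·) ∧ (U.filter (pp x z)).head? = some x := by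
  have mkABW : ∀ p : α, p ≠ b → (U.filter (pp p b)).Chain' (· ≠ ·) →
      ABW b p (U.filter (pp p b)) := by
    intro p hpb hchn
    apply abw_of_alt hpb (U.filter (pp p b)).length _ le_rfl
    · intro t ht; exact mem_of_pp (List.mem_filter.mp ht).2
    · exact hchn
    · exact filter_head_of_head hh (pp_right p b)
    · exact filter_getLast_of_getLast hl (pp_right p b)
  have P1 : PBW b x y (U.filter (ppp x y b)) :=
    lemB hxy hxb hyb U.length U le_rfl (mkABW x hxb axb) (mkABW y hyb ayb) axy (Or.inr oxy)
  have P2 : PBW b y z (U.filter (ppp y z b)) :=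
    lemB hyz hyb hzb U.length U le_rfl (mkABW y hyb ayb) (mkABW z hzb azb) ayz (Or.inr oyz)
  have P3 : PBW b x z (U.filter (ppp x z b)) :=
    lemC hxy hyz hxz hxb hyb hzb U.length U le_rfl P1 P2
  have hkey : (U.filter (ppp x z b)).filter (pp x z) = U.filter (pp x z) := by
    rw [List.filter_filter]
    apply List.filter_congr
    intro t _
    by_cases h1 : pp x z t = true
    · have h2 : ppp x z b t = true := by
        rcases mem_of_pp h1 with rfl | rfl <;> simp [ppp]
      rw [h1, h2]; rfl
    · simp only [Bool.not_eq_true] at h1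
      rw [h1]
      simp
  obtain ⟨hc, ho⟩ := PBW.filter_chain hxz hxb hzb P3
  rw [hkey] at hc ho
  refine ⟨hc, ?_⟩
  rcases ho with h | h
  · exfalso
    have : x ∈ U.filter (pp x z) := List.mem_filter.mpr ⟨hx, pp_left x z⟩
    rw [h] at this; simp at this
  · exact h

end S5X

namespace S5X

variable {α : Type*} [DecidableEq α]

lemma pp_comm (a c : α) (l : List α) : l.filter (pp a c) = l.filter (pp c a) :=
  List.filter_congr (fun x _ => by simp [pp, or_comm])

lemma glue {front back R : List α} (hR : R ≠ [])
    (h1 : front.Chain' (· ≠ ·)) (h2 : back.Chain' (· ≠ ·))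
    (hf : ∀ x ∈ front.getLast?, ∀ y ∈ R.head?, x ≠ y)
    (hb : ∀ x ∈ R.getLast?, ∀ y ∈ back.head?, x ≠ y) :
    (front ++ R ++ back).Chain' (· ≠ ·) ↔ R.Chain' (· ≠ ·) := by
  unfold List.Chain'
  rw [List.append_assoc, List.isChain_append, List.isChain_append]
  constructor
  · rintro ⟨-, ⟨h, -, -⟩, -⟩; exact h
  · intro h
    refine ⟨h1, ⟨h, h2, hb⟩, ?_⟩
    intro x hx y hy
    apply hf x hx y
    cases R with
    | nil => exact absurd rfl hR
    | cons r t => simpa using hy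

lemma glue2 {front R : List α} (hR : R ≠ []) (h1 : front.Chain' (· ≠ ·))
    (hf : ∀ x ∈ front.getLast?, ∀ y ∈ R.head?, x ≠ y) :
    (front ++ R).Chain' (· ≠ ·) ↔ R.Chain' (· ≠ ·) := by
  have := glue (front := front) (back := []) (R := R) hR h1 List.isChain_nil hf
    (by intro x _ y hy; simp at hy)
  simpa using this

lemma dedup_all_eq {p : α} : ∀ {l : List α}, l ≠ [] → (∀ u ∈ l, u = p) → l.dedup = [p] := by
  intro l
  induction l with
  | nil => intro h; exact absurd rfl h
  | cons u t ih =>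
    intro _ hall
    match t, ih with
    | [], _ =>
      rw [hall u (by simp)]; simp
    | v :: t', ih =>
      have hu : u = p := hall u (by simp)
      have hvp : v = p := hall v (by simp)
      have : u ∈ v :: t' := by rw [hu, hvp]; simp
      rw [List.dedup_cons_of_mem this]
      exact ih (by simp) (fun x hx => hall x (by simp [hx]))

lemma dedup_two {p q : α} (hpq : p ≠ q) : ∀ {l : List α}, (∀ u ∈ l, u = p ∨ u = q) →
    l.getLast? = some p → q ∈ l → l.dedup = [q, p] := by
  intro l
  induction l with
  | nil => intro _ h; simp at h
  | cons t rest ih =>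
    intro hall hlast hq
    match rest, ih, hlast, hq with
    | [], _, hlast, hq =>
      have h1 : t = p := by simpa using hlast
      have h2 : q = t := by simpa using hq
      exact absurd (h2.trans h1).symm hpq
    | v :: rest', ih, hlast, hq =>
      have hrest : (v :: rest') ≠ [] := by simp
      have hlast' : (v :: rest').getLast? = some p := by
        rwa [List.getLast?_cons_cons] at hlast
      by_cases ht : t ∈ v :: rest'
      · rw [List.dedup_cons_of_mem ht]
        apply ih (fun x hx => hall x (by simp [hx])) hlast'
        rcases List.mem_cons.mp hq with rfl | h
        · exact ht
        · exact h
      · rw [List.dedup_cons_of_notMem ht]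
        rcases hall t (by simp) with rfl | rfl
        · exact absurd (List.mem_of_mem_getLast? (by rw [hlast']; rfl)) ht
        · have : (v :: rest').dedup = [p] := by
            apply dedup_all_eq hrest
            intro u hu
            rcases hall u (by simp [hu]) with h | h
            · exact h
            · exact absurd (h ▸ hu) ht
          rw [this]

lemma dedup_filter (p : α → Bool) : ∀ (l : List α), (l.filter p).dedup = l.dedup.filter p := by
  intro l
  induction l with
  | nil => simp
  | cons a t ih =>
    by_cases ha : a ∈ t
    · rw [List.dedup_cons_of_mem ha]
      cases hpa : p a
      · rw [List.filter_cons_of_neg (by simp [hpa]), ih]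
      · rw [List.filter_cons_of_pos hpa,
          List.dedup_cons_of_mem (List.mem_filter.mpr ⟨ha, hpa⟩), ih]
    · rw [List.dedup_cons_of_notMem ha]
      cases hpa : p a
      · rw [List.filter_cons_of_neg (by simp [hpa]), ih,
          List.filter_cons_of_neg (by simp [hpa])]
      · rw [List.filter_cons_of_pos hpa,
          List.dedup_cons_of_notMem (fun h => ha (List.mem_filter.mp h).1), ih,
          List.filter_cons_of_pos hpa]

lemma d_pair {w : List α} {a c : α} (hac : a ≠ c) (ha : a ∈ w) (hc : c ∈ w) :
    ∃ p q, ((p = a ∧ q = c) ∨ (p = c ∧ q = a)) ∧ (w.filter (pp a c)).head? = some p ∧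
      (w.reverse.dedup.reverse).filter (pp a c) = [p, q] := by
  have hR : a ∈ w.filter (pp a c) := List.mem_filter.mpr ⟨ha, pp_left a c⟩
  have hcR : c ∈ w.filter (pp a c) := List.mem_filter.mpr ⟨hc, pp_right a c⟩
  have hRne : w.filter (pp a c) ≠ [] := List.ne_nil_of_mem hR
  have main : ∀ p q : α, p ≠ q → (∀ u ∈ w.filter (pp a c), u = p ∨ u = q) →
      (w.filter (pp a c)).head? = some p → q ∈ w.filter (pp a c) →
      (w.reverse.dedup.reverse).filter (pp a c) = [p, q] := by
    intro p q hpq hel hhead hqR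
    rw [List.filter_reverse, ← dedup_filter, List.filter_reverse]
    have h2 : (w.filter (pp a c)).reverse.dedup = [q, p] := by
      apply dedup_two hpq
      · intro u hu; exact hel u (List.mem_reverse.mp hu)
      · rw [List.getLast?_reverse]; exact hhead
      · exact List.mem_reverse.mpr hqR
    rw [h2]
    rfl
  obtain ⟨p, hp⟩ : ∃ p, (w.filter (pp a c)).head? = some p := by
    rcases hw : w.filter (pp a c) with _ | ⟨r, t⟩
    · exact absurd hw hRne
    · exact ⟨r, rfl⟩
  have hpR : p ∈ w.filter (pp a c) := List.mem_of_mem_head? (by simp [hp])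
  rcases mem_of_pp (List.mem_filter.mp hpR).2 with rfl | rfl
  · exact ⟨p, c, Or.inl ⟨rfl, rfl⟩, hp, main p c hac (fun u hu =>
      mem_of_pp (List.mem_filter.mp hu).2) hp hcR⟩
  · exact ⟨p, a, Or.inr ⟨rfl, rfl⟩, hp, main p a (Ne.symm hac) (fun u hu =>
      (mem_of_pp (List.mem_filter.mp hu).2).symm) hp hR⟩

lemma front_core {G : SimpleGraph α} {w : List α} {b : α}
    (hmem : ∀ v : α, v ∈ w)
    (halt : ∀ a c : α, a ≠ c → (G.Adj a c ↔ ((w.filter (pp a c)).Chain' (· ≠ ·))))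
    (hdom : ∀ a : α, a ≠ b → G.Adj a b) :
    ∃ u : List α, (∀ v : α, v ∈ (b :: u ++ w)) ∧
      (∀ a c : α, a ≠ c →
        (G.Adj a c ↔ (((b :: u ++ w).filter (pp a c)).Chain' (· ≠ ·)))) := by
  classical
  set d := w.reverse.dedup.reverse with hd
  have hbd : b ∈ d := by
    rw [hd, List.mem_reverse, List.mem_dedup, List.mem_reverse]
    exact hmem b
  have hnodup : d.Nodup := by rw [hd]; exact List.nodup_reverse.mpr (List.nodup_dedup _)
  obtain ⟨D₁, A, hsplit, hbD₁⟩ := split_first hbd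
  refine ⟨A ++ d, ?_, ?_⟩
  · intro v
    simp [hmem v]
  · have key : ∀ a : α, a ≠ b →
        (((b :: ((A ++ d) ++ w)).filter (pp a b)).Chain' (· ≠ ·)) := by
      intro a hanb
      have hRc : (w.filter (pp a b)).Chain' (· ≠ ·) := (halt a b hanb).mp (hdom a hanb)
      have hRne : w.filter (pp a b) ≠ [] :=
        List.ne_nil_of_mem (List.mem_filter.mpr ⟨hmem a, pp_left a b⟩)
      obtain ⟨p, q, hpq, hheadR, hdfil⟩ := d_pair hanb (hmem a) (hmem b)
      rw [← hd] at hdfil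
      have hdecomp : List.filter (pp a b) D₁ ++ b :: List.filter (pp a b) A = [p, q] := by
        rw [← hdfil, hsplit, List.filter_append, List.filter_cons_of_pos (pp_right a b)]
      have hWfil : List.filter (pp a b) (b :: ((A ++ d) ++ w))
          = b :: ((List.filter (pp a b) A ++ [p, q]) ++ List.filter (pp a b) w) := by
        rw [List.filter_cons_of_pos (pp_right a b), List.filter_append, List.filter_append,
          hdfil]
      rcases hpq with ⟨hp1, hq1⟩ | ⟨hp1, hq1⟩
      · -- p = a, q = b : filter A must be []
        subst p
        subst q
        have hfA : List.filter (pp a b) A = [] := by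
          rcases hD : List.filter (pp a b) D₁ with _ | ⟨t1, _ | ⟨t2, tl2⟩⟩
          · rw [hD, List.nil_append] at hdecomp
            have : b = a := by injection hdecomp
            exact absurd this.symm hanb
          · rw [hD] at hdecomp
            simp only [List.cons_append, List.nil_append, List.cons.injEq] at hdecomp
            exact hdecomp.2.2
          · rw [hD] at hdecomp
            simp only [List.cons_append, List.cons.injEq] at hdecomp
            exfalso
            have ht2 : t2 ∈ List.filter (pp a b) D₁ := by rw [hD]; simp
            have h3 : t2 ∈ D₁ := (List.mem_filter.mp ht2).1
            rw [hdecomp.2.1] at h3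
            exact hbD₁ h3
        rw [hWfil, hfA]
        refine (glue2 (front := [b, a, b]) (R := List.filter (pp a b) w) hRne ?_ ?_).mpr hRc
        · simp [List.Chain', List.isChain_cons_cons, hanb, Ne.symm hanb]
        · intro u hu v hv
          have hu' : u = b := by have := hu; simp at this; exact this.symm
          have hv' : v = a := by rw [hheadR] at hv; have := hv; simp at this; exact this.symm
          rw [hu', hv']
          exact Ne.symm hanb
      · -- p = b, q = a : filter A = [a]
        subst p
        subst q
        have hfA : List.filter (pp a b) A = [a] := by
          rcases hD : List.filter (pp a b) D₁ with _ | ⟨t1, tl1⟩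
          · rw [hD, List.nil_append] at hdecomp
            simp only [List.cons.injEq] at hdecomp
            exact hdecomp.2
          · exfalso
            have ht1 : t1 ∈ List.filter (pp a b) D₁ := by rw [hD]; simp
            have h3 : t1 ∈ D₁ := (List.mem_filter.mp ht1).1
            have ht1b : t1 = b := by
              have h4 := congrArg List.head? hdecomp
              rw [hD] at h4
              simpa using h4
            rw [ht1b] at h3
            exact hbD₁ h3
        rw [hWfil, hfA]
        refine (glue2 (front := [b, a, b, a]) (R := List.filter (pp a b) w) hRne ?_ ?_).mpr hRc
        · simp [List.Chain', List.isChain_cons_cons, hanb, Ne.symm hanb]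
        · intro u hu v hv
          have hu' : u = a := by have := hu; simp at this; exact this.symm
          have hv' : v = b := by rw [hheadR] at hv; have := hv; simp at this; exact this.symm
          rw [hu', hv']
          exact hanb
    intro a c hac
    show G.Adj a c ↔ (((b :: ((A ++ d) ++ w)).filter (pp a c)).Chain' (· ≠ ·))
    by_cases hcb : c = b
    · subst c
      exact iff_of_true (hdom a hac) (key a hac)
    · by_cases hab : a = b
      · subst a
        rw [G.adj_comm, pp_comm b c]
        exact iff_of_true (hdom c hcb) (key c hcb)
      · -- main case : both differ from b
        rw [halt a c hac]
        have hppb : pp a c b = false := by simp [pp, Ne.symm hab, Ne.symm hcb]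
        have hRne : w.filter (pp a c) ≠ [] :=
          List.ne_nil_of_mem (List.mem_filter.mpr ⟨hmem a, pp_left a c⟩)
        obtain ⟨p, q, hpq, hheadR, hdfil⟩ := d_pair hac (hmem a) (hmem c)
        rw [← hd] at hdfil
        have hpqne : p ≠ q := by
          rcases hpq with ⟨h1, h2⟩ | ⟨h1, h2⟩
          · rw [h1, h2]; exact hac
          · rw [h1, h2]; exact Ne.symm hac
        have hdecomp : List.filter (pp a c) D₁ ++ List.filter (pp a c) A = [p, q] := by
          rw [← hdfil, hsplit, List.filter_append,
            List.filter_cons_of_neg (by simp [hppb])]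
        have hWfil : List.filter (pp a c) (b :: ((A ++ d) ++ w))
            = (List.filter (pp a c) A ++ [p, q]) ++ List.filter (pp a c) w := by
          rw [List.filter_cons_of_neg (by simp [hppb]), List.filter_append,
            List.filter_append, hdfil]
        have hfA : List.filter (pp a c) A = [] ∨ List.filter (pp a c) A = [q] ∨
            List.filter (pp a c) A = [p, q] := by
          rcases hD : List.filter (pp a c) D₁ with _ | ⟨t1, _ | ⟨t2, _ | ⟨t3, tl3⟩⟩⟩
          · rw [hD, List.nil_append] at hdecomp
            exact Or.inr (Or.inr hdecomp)
          · rw [hD] at hdecomp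
            simp only [List.cons_append, List.nil_append, List.cons.injEq] at hdecomp
            exact Or.inr (Or.inl hdecomp.2)
          · rw [hD] at hdecomp
            simp only [List.cons_append, List.cons.injEq] at hdecomp
            exact Or.inl hdecomp.2.2
          · exfalso
            have h5 := congrArg List.length hdecomp
            rw [hD] at h5
            simp [List.length_append] at h5
        rw [hWfil]
        have hgoal : ∀ front : List α, front.Chain' (· ≠ ·) → front.getLast? = some q →
            (((front ++ List.filter (pp a c) w).Chain' (· ≠ ·)) ↔
              ((List.filter (pp a c) w).Chain' (· ≠ ·))) := by
          intro f hf hlast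
          apply glue2 hRne hf
          intro u hu v hv
          have hu' : u = q := by rw [hlast] at hu; have := hu; simp at this; exact this.symm
          have hv' : v = p := by rw [hheadR] at hv; have := hv; simp at this; exact this.symm
          rw [hu', hv']
          exact Ne.symm hpqne
        rcases hfA with h | h | h <;> rw [h]
        · exact (hgoal [p, q] (by simp [List.Chain', List.isChain_cons_cons, hpqne]) rfl).symm
        · exact (hgoal [q, p, q]
            (by simp [List.Chain', List.isChain_cons_cons, hpqne, Ne.symm hpqne]) rfl).symm
        · exact (hgoal [p, q, p, q]
            (by simp [List.Chain', List.isChain_cons_cons, hpqne, Ne.symm hpqne]) rfl).symm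

lemma rev_core {w : List α} {G : SimpleGraph α}
    (halt : ∀ a c : α, a ≠ c → (G.Adj a c ↔ ((w.filter (pp a c)).Chain' (· ≠ ·)))) :
    ∀ a c : α, a ≠ c → (G.Adj a c ↔ ((w.reverse.filter (pp a c)).Chain' (· ≠ ·))) := by
  intro a c hac
  rw [halt a c hac, List.filter_reverse]
  constructor
  · intro h
    unfold List.Chain' at h ⊢
    rw [List.isChain_reverse]
    exact h.imp fun u v huv => Ne.symm huv
  · intro h
    unfold List.Chain' at h ⊢
    rw [List.isChain_reverse] at h
    exact h.imp fun u v huv => Ne.symm huv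

lemma good_word {G : SimpleGraph α} {w : List α} {b : α}
    (hmem : ∀ v : α, v ∈ w)
    (halt : ∀ a c : α, a ≠ c → (G.Adj a c ↔ ((w.filter (pp a c)).Chain' (· ≠ ·))))
    (hdom : ∀ a : α, a ≠ b → G.Adj a b) :
    ∃ U : List α, (∀ v : α, v ∈ U) ∧
      (∀ a c : α, a ≠ c → (G.Adj a c ↔ ((U.filter (pp a c)).Chain' (· ≠ ·)))) ∧
      U.head? = some b ∧ U.getLast? = some b := by
  obtain ⟨u₁, hm1, ha1⟩ := front_core hmem halt hdom
  obtain ⟨u₂, hm2, ha2⟩ := front_core (w := (b :: u₁ ++ w).reverse)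
    (fun v => List.mem_reverse.mpr (hm1 v)) (rev_core ha1) hdom
  refine ⟨(b :: u₂ ++ (b :: u₁ ++ w).reverse).reverse, ?_, ?_, ?_, ?_⟩
  · intro v
    rw [List.mem_reverse]
    exact hm2 v
  · exact rev_core ha2
  · rw [List.head?_reverse]
    show (((b :: u₂) ++ (b :: u₁ ++ w).reverse)).getLast? = some b
    rw [List.getLast?_append, List.getLast?_reverse]
    rfl
  · rw [List.getLast?_reverse]
    rfl

end S5X

namespace S5X

lemma wr_induce {V : Type*} [DecidableEq V] (G : SimpleGraph V) (S : Set V)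
    (h : WordRepresentable G) : WordRepresentable (G.induce S) := by
  classical
  obtain ⟨w, h1, h2⟩ := h
  let f : V → Option ↥S := fun v => if hv : v ∈ S then some ⟨v, hv⟩ else none
  refine ⟨w.filterMap f, ?_, ?_⟩
  · rintro ⟨v, hv⟩
    exact List.mem_filterMap.mpr ⟨v, h1 v, by simp [f, hv]⟩
  · intro a c hne
    have hvalne : (a : V) ≠ (c : V) := fun h => hne (Subtype.ext h)
    have key : ((w.filterMap f).filter (pp a c)).map Subtype.val
        = w.filter (pp (a : V) (c : V)) := by
      clear h1 h2
      induction w with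
      | nil => simp
      | cons v t ih =>
        rw [List.filterMap_cons]
        by_cases hv : v ∈ S
        · have hfv : f v = some ⟨v, hv⟩ := dif_pos hv
          rw [hfv]
          by_cases hp : pp (a : V) (c : V) v = true
          · have hps : pp a c (⟨v, hv⟩ : ↥S) = true := by
              simp only [pp, decide_eq_true_eq] at hp ⊢
              rcases hp with h | h
              · exact Or.inl (Subtype.ext h)
              · exact Or.inr (Subtype.ext h)
            rw [List.filter_cons_of_pos hps, List.filter_cons_of_pos hp, List.map_cons, ih]
          · have hps : ¬ pp a c (⟨v, hv⟩ : ↥S) = true := by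
              simp only [pp, decide_eq_true_eq] at hp ⊢
              push_neg at hp ⊢
              exact ⟨fun h => hp.1 (congrArg Subtype.val h),
                fun h => hp.2 (congrArg Subtype.val h)⟩
            rw [List.filter_cons_of_neg hps, List.filter_cons_of_neg hp, ih]
        · have hfv : f v = none := dif_neg hv
          rw [hfv]
          have hp : ¬ pp (a : V) (c : V) v = true := by
            simp only [pp, decide_eq_true_eq]
            push_neg
            constructor
            · intro h; rw [h] at hv; exact hv a.2
            · intro h; rw [h] at hv; exact hv c.2
          rw [List.filter_cons_of_neg hp, ih]
    show G.Adj ↑a ↑c ↔ Alternates (w.filterMap f) a c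
    rw [h2 ↑a ↑c hvalne]
    show (w.filter (pp (a : V) (c : V))).Chain' (· ≠ ·) ↔
      ((w.filterMap f).filter (pp a c)).Chain' (· ≠ ·)
    unfold List.Chain'
    rw [← key, List.isChain_map]
    constructor
    · intro h
      exact h.imp fun u v huv he => huv (congrArg Subtype.val he)
    · intro h
      exact h.imp fun u v huv he => huv (Subtype.ext he)

lemma nbhd_comparability {V : Type*} [DecidableEq V] (G : SimpleGraph V) (b : V)
    (h : WordRepresentable (G.induce (insert b (G.neighborSet b)))) :
    IsComparability (G.induce (G.neighborSet b)) := by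
  classical
  obtain ⟨w, hmem, haltw⟩ := h
  let b₁ : ↥(insert b (G.neighborSet b)) := ⟨b, Set.mem_insert _ _⟩
  have hdom : ∀ a : ↥(insert b (G.neighborSet b)), a ≠ b₁ →
      (G.induce (insert b (G.neighborSet b))).Adj a b₁ := by
    rintro ⟨a, ha⟩ hne
    have hne' : a ≠ b := fun h => hne (Subtype.ext h)
    have haN : a ∈ G.neighborSet b := by
      rcases ha with rfl | h
      · exact absurd rfl hne'
      · exact h
    exact ((G.mem_neighborSet b a).mp haN).symm
  have halt' : ∀ a c : ↥(insert b (G.neighborSet b)), a ≠ c →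
      ((G.induce (insert b (G.neighborSet b))).Adj a c ↔
        ((w.filter (pp a c)).Chain' (· ≠ ·))) :=
    fun a c hne => haltw a c hne
  obtain ⟨U, hUmem, hUalt, hUh, hUl⟩ := good_word hmem halt' hdom
  let ι : ↥(G.neighborSet b) → ↥(insert b (G.neighborSet b)) :=
    fun x => ⟨x.1, Set.mem_insert_of_mem _ x.2⟩
  have hι : Function.Injective ι := by
    intro x y h
    have hval := congrArg Subtype.val h
    exact Subtype.ext hval
  have hιb : ∀ x : ↥(G.neighborSet b), ι x ≠ b₁ := by
    intro x h
    have hxb := congrArg Subtype.val h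
    have hadj : G.Adj b x := x.2
    rw [show (x : V) = b from hxb] at hadj
    exact G.loopless.irrefl b hadj
  refine ⟨fun x y => (G.induce (G.neighborSet b)).Adj x y ∧
    (U.filter (pp (ι x) (ι y))).head? = some (ι x), ?_, ?_, ?_⟩
  · rintro x y z ⟨haxy, hoxy⟩ ⟨hayz, hoyz⟩
    have hxyne : x ≠ y := fun h => (G.induce (G.neighborSet b)).loopless.irrefl y (h ▸ haxy)
    have hyzne : y ≠ z := fun h => (G.induce (G.neighborSet b)).loopless.irrefl z (h ▸ hayz)
    have hxzne : x ≠ z := by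
      intro h
      rw [h] at hoxy
      rw [pp_comm (ι y) (ι z)] at hoyz
      rw [hoxy] at hoyz
      have : ι z = ι y := by injection hoyz
      exact hyzne (hι this).symm
    have hM := mega (b := b₁) (x := ι x) (y := ι y) (z := ι z)
      (fun h => hxyne (hι h)) (fun h => hyzne (hι h)) (fun h => hxzne (hι h))
      (hιb x) (hιb y) (hιb z) hUh hUl (hUmem (ι x))
      ((hUalt (ι x) b₁ (hιb x)).mp (hdom (ι x) (hιb x)))
      ((hUalt (ι y) b₁ (hιb y)).mp (hdom (ι y) (hιb y)))
      ((hUalt (ι z) b₁ (hιb z)).mp (hdom (ι z) (hιb z)))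
      ((hUalt (ι x) (ι y) (fun h => hxyne (hι h))).mp haxy)
      ((hUalt (ι y) (ι z) (fun h => hyzne (hι h))).mp hayz)
      hoxy hoyz
    exact ⟨(hUalt (ι x) (ι z) (fun h => hxzne (hι h))).mpr hM.1, hM.2⟩
  · rintro x y ⟨h, -⟩
    exact h
  · intro x y hadjxy
    have hne : x ≠ y := fun h => (G.induce (G.neighborSet b)).loopless.irrefl y (h ▸ hadjxy)
    have hιne : ι x ≠ ι y := fun h => hne (hι h)
    constructor
    · rintro ⟨-, h2⟩ ⟨-, h4⟩
      rw [pp_comm (ι y) (ι x), h2] at h4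
      have hinj : ι x = ι y := by injection h4
      exact hιne hinj
    · intro hn
      refine ⟨hadjxy, ?_⟩
      have hxF : ι x ∈ U.filter (pp (ι x) (ι y)) :=
        List.mem_filter.mpr ⟨hUmem (ι x), pp_left _ _⟩
      obtain ⟨h0, hh0⟩ : ∃ h0, (U.filter (pp (ι x) (ι y))).head? = some h0 := by
        rcases hF : U.filter (pp (ι x) (ι y)) with _ | ⟨r, t⟩
        · rw [hF] at hxF; simp at hxF
        · exact ⟨r, rfl⟩
      have hmem0 : h0 ∈ (U.filter (pp (ι x) (ι y))).head? := by rw [hh0]; rfl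
      have hh0m : h0 ∈ U.filter (pp (ι x) (ι y)) := List.mem_of_mem_head? hmem0
      rcases mem_of_pp (List.mem_filter.mp hh0m).2 with rfl | rfl
      · exact hh0
      · exfalso
        apply hn
        refine ⟨hadjxy.symm, ?_⟩
        rw [pp_comm (ι y) (ι x)]
        exact hh0
  
end S5X

/-- for `G₁` induced on `N_G(b) ∪ {b}`, word-representability of `G₁` forces
`G[N_G(b)]` to be a comparability graph; in particular, in a word-representable graph every
neighborhood induces a comparability graph. -/
theorem stmt5 {V : Type*} [DecidableEq V] [Fintype V] (G : SimpleGraph V) (b : V) :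
    (WordRepresentable (G.induce (insert b (G.neighborSet b))) →
      IsComparability (G.induce (G.neighborSet b))) ∧
    (WordRepresentable G → IsComparability (G.induce (G.neighborSet b))) := by
  classical
  constructor
  · exact S5X.nbhd_comparability G b
  · intro h
    exact S5X.nbhd_comparability G b (S5X.wr_induce G _ h)
end

section
/- In a word-representable graph G, every non-trivial module M (a module with 2 ≤ |M| < |V(G)|) induces a comparability subgraph G[M], provided G is connected. -/
namespace S15
variable {V : Type*} [DecidableEq V]

/-- the two-letter filtered subword, matching the `Alternates` definition -/
def fw (u v : V) (l : List V) : List V := l.filter (fun z => decide (z = u ∨ z = v))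

@[simp] lemma fw_nil (u v : V) : fw u v [] = [] := rfl

lemma fw_cons (u v y : V) (l : List V) :
    fw u v (y :: l) = if y = u ∨ y = v then y :: fw u v l else fw u v l := by
  by_cases h : y = u ∨ y = v <;> simp [fw, List.filter_cons, h]

lemma fw_append (u v : V) (l l' : List V) : fw u v (l ++ l') = fw u v l ++ fw u v l' := by
  simp [fw]

lemma fw_comm (u v : V) (l : List V) : fw u v l = fw v u l := by
  unfold fw
  exact List.filter_congr (fun z _ => by simp [or_comm])

lemma mem_fw {u v z : V} {l : List V} (h : z ∈ fw u v l) : (z = u ∨ z = v) ∧ z ∈ l := by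
  unfold fw at h
  have := List.of_mem_filter h
  simp at this
  exact ⟨this, (List.mem_filter.1 h).1⟩

lemma count_fw_left (u v : V) (l : List V) : (fw u v l).count u = l.count u :=
  List.count_filter (by simp)

lemma count_fw_right (u v : V) (l : List V) : (fw u v l).count v = l.count v :=
  List.count_filter (by simp)

lemma length_fw (u v : V) (l : List V) (huv : u ≠ v) :
    (fw u v l).length = l.count u + l.count v := by
  induction l with
  | nil => simp
  | cons y l ih =>
    rw [fw_cons]
    by_cases h : y = u ∨ y = v
    · rcases h with h | h <;> subst h <;>
        simp [List.count_cons, ih, huv, huv.symm, if_neg] <;> omega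
    · push_neg at h
      have h1 : ¬ (y == u) = true := by simpa using h.1
      have h2 : ¬ (y == v) = true := by simpa using h.2
      simp [List.count_cons, ih, h1, h2, h.1, h.2]

lemma count_mem_pos {z : V} {l : List V} (h : z ∈ l) : 1 ≤ l.count z :=
  List.count_pos_iff.mpr h

lemma fw_eq_of_counts (u v : V) (l : List V) (huv : u ≠ v)
    (hu : l.count u ≤ 1) (hv : l.count v ≤ 1) :
    fw u v l = [] ∨ fw u v l = [u] ∨ fw u v l = [v] ∨ fw u v l = [u, v] ∨ fw u v l = [v, u] := by
  have hlen : (fw u v l).length = l.count u + l.count v := length_fw u v l huv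
  have hcu : (fw u v l).count u = l.count u := count_fw_left u v l
  have hcv : (fw u v l).count v = l.count v := count_fw_right u v l
  have hle : (fw u v l).length ≤ 2 := by omega
  set f := fw u v l with hf
  interval_cases hL : f.length
  · left; exact List.length_eq_zero_iff.1 hL
  · obtain ⟨z, hz⟩ := List.length_eq_one_iff.1 hL
    have hzm : z ∈ f := by simp [hz]
    rcases (mem_fw hzm).1 with rfl | rfl
    · right; left; exact hz
    · right; right; left; exact hz
  · obtain ⟨z1, z2, hz⟩ := List.length_eq_two.1 hL
    have h1 : z1 ∈ f := by simp [hz]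
    have h2 : z2 ∈ f := by simp [hz]
    have hcu2 : f.count u ≤ 1 := by rw [hcu]; exact hu
    have hcv2 : f.count v ≤ 1 := by rw [hcv]; exact hv
    rcases (mem_fw h1).1 with rfl | rfl <;> rcases (mem_fw h2).1 with rfl | rfl
    · exfalso; rw [hz] at hcu2; simp [List.count_cons] at hcu2
    · right; right; right; left; exact hz
    · right; right; right; right; exact hz
    · exfalso; rw [hz] at hcv2; simp [List.count_cons] at hcv2

end S15

namespace S15X
open S15
variable {V : Type*} [DecidableEq V]

def fw3 (a b c : V) (l : List V) : List V := l.filter (fun z => decide (z = a ∨ z = b ∨ z = c))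

lemma fw3_cons (a b c y : V) (l : List V) :
    fw3 a b c (y :: l) = if y = a ∨ y = b ∨ y = c then y :: fw3 a b c l else fw3 a b c l := by
  by_cases h : y = a ∨ y = b ∨ y = c <;> simp [fw3, List.filter_cons, h]

lemma length_fw3 (a b c : V) (l : List V) (hab : a ≠ b) (hac : a ≠ c) (hbc : b ≠ c) :
    (fw3 a b c l).length = l.count a + l.count b + l.count c := by
  induction l with
  | nil => simp [fw3]
  | cons y l ih =>
    rw [fw3_cons]
    by_cases h : y = a ∨ y = b ∨ y = c
    · rcases h with h | h | h <;> subst h <;>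
        simp [List.count_cons, ih, hab, hac, hbc, hab.symm, hac.symm, hbc.symm] <;> omega
    · push_neg at h
      have h1 : ¬ (y == a) = true := by simpa using h.1
      have h2 : ¬ (y == b) = true := by simpa using h.2.1
      have h3 : ¬ (y == c) = true := by simpa using h.2.2
      simp [List.count_cons, ih, h1, h2, h3, h.1, h.2.1, h.2.2]

lemma fw_fw3_left (a b c : V) (l : List V) : fw a b (fw3 a b c l) = fw a b l := by
  unfold fw fw3
  rw [List.filter_filter]
  exact List.filter_congr (fun z _ => by
    by_cases h : z = a ∨ z = b
    · have : z = a ∨ z = b ∨ z = c := by tauto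
      simp [h, this]
    · simp [h])

lemma fw_fw3_right (a b c : V) (l : List V) : fw b c (fw3 a b c l) = fw b c l := by
  unfold fw fw3
  rw [List.filter_filter]
  exact List.filter_congr (fun z _ => by
    by_cases h : z = b ∨ z = c
    · have : z = a ∨ z = b ∨ z = c := by tauto
      simp [h, this]
    · simp [h])

lemma fw_fw3_outer (a b c : V) (l : List V) : fw a c (fw3 a b c l) = fw a c l := by
  unfold fw fw3
  rw [List.filter_filter]
  exact List.filter_congr (fun z _ => by
    by_cases h : z = a ∨ z = c
    · have : z = a ∨ z = b ∨ z = c := by tauto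
      simp [h, this]
    · simp [h])

lemma perm3 {a b c : V} (hab : a ≠ b) (hac : a ≠ c) (hbc : b ≠ c) (s : List V)
    (ha : s.count a = 1) (hb : s.count b = 1) (hc : s.count c = 1)
    (h1 : fw a b s = [a, b]) (h2 : fw b c s = [b, c]) : fw a c s = [a, c] := by
  have hlen : (fw3 a b c s).length = 3 := by
    rw [length_fw3 a b c s hab hac hbc, ha, hb, hc]
  obtain ⟨p, q, r, hpqr⟩ := List.length_eq_three.1 hlen
  have hca : (fw3 a b c s).count a = 1 := by
    rw [show (fw3 a b c s).count a = s.count a from List.count_filter (by simp)]; exact ha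
  have hcb : (fw3 a b c s).count b = 1 := by
    rw [show (fw3 a b c s).count b = s.count b from List.count_filter (by simp)]; exact hb
  have hcc : (fw3 a b c s).count c = 1 := by
    rw [show (fw3 a b c s).count c = s.count c from List.count_filter (by simp)]; exact hc
  have hp : p = a ∨ p = b ∨ p = c := by
    have : p ∈ fw3 a b c s := by simp [hpqr]
    simpa using List.of_mem_filter this
  have hq : q = a ∨ q = b ∨ q = c := by
    have : q ∈ fw3 a b c s := by simp [hpqr]
    simpa using List.of_mem_filter this
  have hr : r = a ∨ r = b ∨ r = c := by
    have : r ∈ fw3 a b c s := by simp [hpqr]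
    simpa using List.of_mem_filter this
  rw [← fw_fw3_left a b c s, hpqr] at h1
  rw [← fw_fw3_right a b c s, hpqr] at h2
  rw [← fw_fw3_outer a b c s, hpqr]
  rw [hpqr] at hca hcb hcc
  rcases hp with rfl | rfl | rfl <;> rcases hq with rfl | rfl | rfl <;>
    rcases hr with rfl | rfl | rfl <;>
    simp_all [fw_cons, List.count_cons, hab, hac, hbc, hab.symm, hac.symm, hbc.symm]

end S15X

namespace S15Y
open S15
variable {V : Type*} [DecidableEq V]

lemma split_first {x : V} {w : List V} (h : x ∈ w) :
    ∃ s r, w = s ++ x :: r ∧ x ∉ s := by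
  induction w with
  | nil => simp at h
  | cons y w ih =>
    by_cases hy : y = x
    · exact ⟨[], w, by simp [hy], by simp⟩
    · have h' : x ∈ w := (List.mem_cons.1 h).resolve_left (fun e => hy e.symm)
      obtain ⟨s, r, hsr, hxs⟩ := ih h'
      exact ⟨y :: s, r, by simp [hsr], by simp [hxs, Ne.symm hy]⟩

lemma dec1 (x : V) : ∀ (n : ℕ) (w : List V), w.count x = n + 1 →
    ∃ (P : List (List V)) (sE : List V),
      w = (P.map (· ++ [x])).flatten ++ sE ∧ (∀ s ∈ P, x ∉ s) ∧ x ∉ sE ∧ P.length = n + 1 := by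
  intro n
  induction n with
  | zero =>
    intro w hw
    have hx : x ∈ w := List.count_pos_iff.mp (by omega)
    obtain ⟨s, r, rfl, hxs⟩ := split_first hx
    have hs0 : s.count x = 0 := List.count_eq_zero_of_not_mem hxs
    have hr0 : r.count x = 0 := by
      rw [List.count_append, List.count_cons_self, hs0] at hw
      omega
    exact ⟨[s], r, by simp, by simpa using hxs, List.count_eq_zero.1 hr0, by simp⟩
  | succ n ih =>
    intro w hw
    have hx : x ∈ w := List.count_pos_iff.mp (by omega)
    obtain ⟨s, r, rfl, hxs⟩ := split_first hx
    have hs0 : s.count x = 0 := List.count_eq_zero_of_not_mem hxs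
    have hr : r.count x = n + 1 := by
      rw [List.count_append, List.count_cons_self, hs0] at hw
      omega
    obtain ⟨P, sE, rfl, hP, hsE, hlen⟩ := ih r hr
    refine ⟨s :: P, sE, by simp, ?_, hsE, by simp [hlen]⟩
    intro t ht
    rcases List.mem_cons.1 ht with rfl | ht
    · exact hxs
    · exact hP t ht

/-- decomposition of a word with at least two `x`'s -/
lemma shape {x : V} {w : List V} (h : 2 ≤ w.count x) :
    ∃ (s0 s1 : List V) (P : List (List V)) (sE : List V),
      w = s0 ++ x :: (((s1 :: P).map (· ++ [x])).flatten ++ sE) ∧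
      x ∉ s0 ∧ x ∉ s1 ∧ (∀ s ∈ P, x ∉ s) ∧ x ∉ sE := by
  have hx : x ∈ w := List.count_pos_iff.mp (by omega)
  obtain ⟨s0, r, rfl, hxs0⟩ := split_first hx
  have hs0 : s0.count x = 0 := List.count_eq_zero_of_not_mem hxs0
  have hr : 1 ≤ r.count x := by
    rw [List.count_append, List.count_cons_self, hs0] at h
    omega
  obtain ⟨P, sE, hre, hP, hsE, hlen⟩ := dec1 x (r.count x - 1) r (by omega)
  match P, hlen with
  | s1 :: P', _ =>
    exact ⟨s0, s1, P', sE, by rw [hre], hxs0, hP s1 (by simp),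
      fun s hs => hP s (by simp [hs]), hsE⟩

lemma fw_cons_x {u v x : V} (hu : x ≠ u) (hv : x ≠ v) (l : List V) :
    fw u v (x :: l) = fw u v l := by
  rw [fw_cons]; simp [hu, hv]

lemma fw_single_x {u v x : V} (hu : x ≠ u) (hv : x ≠ v) :
    fw u v [x] = [] := by
  rw [show ([x] : List V) = x :: [] from rfl, fw_cons_x hu hv]; rfl

lemma fw_join_x {u v x : V} (hu : x ≠ u) (hv : x ≠ v) (P : List (List V)) (t : List V) :
    fw u v ((P.map (· ++ [x])).flatten ++ t) = ((P.map (fw u v)).flatten) ++ fw u v t := by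
  induction P with
  | nil => simp
  | cons s P ih =>
    simp only [List.map_cons, List.flatten_cons, List.append_assoc]
    rw [fw_append, fw_append, fw_single_x hu hv, ih]
    simp

/-- fw for a pair containing x, over an x-free list, is a replicate -/
lemma fw_x_free {m x : V} {s : List V} (hxs : x ∉ s) :
    fw x m s = List.replicate (s.count m) m := by
  induction s with
  | nil => simp
  | cons y s ih =>
    have hyx : ¬ y = x := fun h => hxs (by simp [h])
    have ihs := ih (fun h => hxs (by simp [h]))
    by_cases hym : y = m
    · subst hym
      rw [fw_cons]
      simp [List.count_cons, ihs, List.replicate_succ]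
    · rw [fw_cons]
      have h1 : ¬ (y == m) = true := by simpa using hym
      simp [hyx, hym, ihs, List.count_cons, h1]

omit [DecidableEq V] in
lemma repl_one {k : ℕ} {m x : V} {t : List V}
    (h : List.Chain' (· ≠ ·) (x :: (List.replicate k m ++ x :: t))) : k = 1 := by
  match k, h with
  | 0, h => simp [List.Chain'] at h
  | 1, h => rfl
  | (k+2), h =>
    exfalso
    rw [List.replicate_succ, List.replicate_succ] at h
    simp [List.Chain'] at h

omit [DecidableEq V] in
lemma repl_le_one_head {k : ℕ} {m : V} {t : List V}
    (h : List.Chain' (· ≠ ·) (List.replicate k m ++ t)) : k ≤ 1 := by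
  match k, h with
  | 0, h => omega
  | 1, h => omega
  | (k+2), h =>
    exfalso
    rw [List.replicate_succ, List.replicate_succ] at h
    simp [List.Chain'] at h

omit [DecidableEq V] in
lemma repl_le_one_tail {k : ℕ} {m x : V} (h : List.Chain' (· ≠ ·) (x :: List.replicate k m)) :
    k ≤ 1 := by
  match k, h with
  | 0, h => omega
  | 1, h => omega
  | (k+2), h =>
    exfalso
    rw [List.replicate_succ, List.replicate_succ] at h
    simp [List.Chain'] at h

lemma counts_interior {m x : V} (hmx : m ≠ x) :
    ∀ (P : List (List V)) (sE : List V), (∀ s ∈ P, x ∉ s) → x ∉ sE →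
    List.Chain' (· ≠ ·) (x :: fw x m ((P.map (· ++ [x])).flatten ++ sE)) →
    (∀ s ∈ P, s.count m = 1) ∧ sE.count m ≤ 1 := by
  intro P
  induction P with
  | nil =>
    intro sE _ hxsE h
    simp only [List.map_nil, List.flatten_nil, List.nil_append] at h
    rw [fw_x_free hxsE] at h
    exact ⟨by simp, repl_le_one_tail h⟩
  | cons s P ih =>
    intro sE hxP hxsE h
    simp only [List.map_cons, List.flatten_cons, List.append_assoc] at h
    rw [fw_append, fw_append] at h
    have hxs : x ∉ s := hxP s (by simp)
    rw [fw_x_free hxs] at h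
    have hfx : fw x m [x] = [x] := by
      rw [show ([x] : List V) = x :: [] from rfl, fw_cons]; simp
    rw [hfx] at h
    have h' : List.Chain' (· ≠ ·)
        (x :: (List.replicate (s.count m) m ++
          x :: fw x m ((P.map (· ++ [x])).flatten ++ sE))) := by
      simpa using h
    have hk := repl_one h'
    have hsuf : List.Chain' (· ≠ ·) (x :: fw x m ((P.map (· ++ [x])).flatten ++ sE)) := by
      refine h'.suffix ?_
      exact ⟨x :: List.replicate (s.count m) m, by simp⟩
    obtain ⟨h1, h2⟩ := ih sE (fun t ht => hxP t (by simp [ht])) hxsE hsuf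
    refine ⟨?_, h2⟩
    intro t ht
    rcases List.mem_cons.1 ht with rfl | ht
    · exact hk
    · exact h1 t ht

end S15Y

namespace S15Z
open S15 S15X S15Y
variable {V : Type*} [DecidableEq V]

lemma fw_pair_of_counts {u v : V} (huv : u ≠ v) {s : List V}
    (hu : s.count u = 1) (hv : s.count v = 1) :
    fw u v s = [u, v] ∨ fw u v s = [v, u] := by
  have hcu : (fw u v s).count u = 1 := by rw [count_fw_left]; exact hu
  have hcv : (fw u v s).count v = 1 := by rw [count_fw_right]; exact hv
  rcases fw_eq_of_counts u v s huv (by omega) (by omega) with h | h | h | h | h <;>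
    rw [h] at hcu hcv <;> simp_all [List.count_cons, huv, huv.symm]

omit [DecidableEq V] in
lemma chain_drop2 {p q : V} {l : List V}
    (h : List.Chain' (· ≠ ·) (p :: q :: p :: l)) : List.Chain' (· ≠ ·) (p :: l) :=
  (List.isChain_cons_cons.1 (List.isChain_cons_cons.1 h).2).2

lemma count_eq_one_of_mem {z : V} {l : List V} (h : z ∈ l) (h' : l.count z ≤ 1) :
    l.count z = 1 := by
  have := List.count_pos_iff.mpr h
  omega

lemma mem_fw_right {u v : V} {l : List V} (h : v ∈ l) : v ∈ fw u v l :=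
  List.mem_filter.2 ⟨h, by simp⟩

lemma mem_fw_left {u v : V} {l : List V} (h : u ∈ l) : u ∈ fw u v l :=
  List.mem_filter.2 ⟨h, by simp⟩

lemma ind_main {a b c : V} (hab : a ≠ b) (hac : a ≠ c) (hbc : b ≠ c) :
    ∀ (P : List (List V)) (sE : List V),
    (∀ s ∈ P, s.count a = 1 ∧ s.count b = 1 ∧ s.count c = 1) →
    sE.count a ≤ 1 → sE.count b ≤ 1 → sE.count c ≤ 1 →
    List.Chain' (· ≠ ·) (b :: fw a b (P.flatten ++ sE)) →
    List.Chain' (· ≠ ·) (c :: fw b c (P.flatten ++ sE)) →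
    List.Chain' (· ≠ ·) (c :: fw a c (P.flatten ++ sE)) := by
  intro P
  induction P with
  | nil =>
    intro sE _ hA hB hC h1 h2
    simp only [List.flatten_nil, List.nil_append] at *
    by_cases hcm : c ∈ sE
    · have hfbc : fw b c sE = [b, c] := by
        rcases fw_eq_of_counts b c sE hbc hB hC with h | h | h | h | h
        · exfalso; have := mem_fw_right (u := b) hcm; rw [h] at this; simp at this
        · exfalso; have := mem_fw_right (u := b) hcm; rw [h] at this
          simp [hbc.symm] at this
        · exfalso; rw [h] at h2; exact (List.isChain_cons_cons.1 h2).1 rfl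
        · exact h
        · exfalso; rw [h] at h2; exact (List.isChain_cons_cons.1 h2).1 rfl
      have hbm : b ∈ sE := (mem_fw (show b ∈ fw b c sE by rw [hfbc]; simp)).2
      have hfab : fw a b sE = [a, b] := by
        rcases fw_eq_of_counts a b sE hab hA hB with h | h | h | h | h
        · exfalso; have := mem_fw_right (u := a) hbm; rw [h] at this; simp at this
        · exfalso; have := mem_fw_right (u := a) hbm; rw [h] at this
          simp [hab.symm] at this
        · exfalso; rw [h] at h1; exact (List.isChain_cons_cons.1 h1).1 rfl
        · exact h
        · exfalso; rw [h] at h1; exact (List.isChain_cons_cons.1 h1).1 rfl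
      have ham : a ∈ sE := (mem_fw (show a ∈ fw a b sE by rw [hfab]; simp)).2
      have hperm := perm3 hab hac hbc sE (count_eq_one_of_mem ham hA)
        (count_eq_one_of_mem hbm hB) (count_eq_one_of_mem hcm hC) hfab hfbc
      rw [hperm]
      exact List.isChain_cons_cons.2 ⟨hac.symm, List.isChain_cons_cons.2 ⟨hac, List.isChain_singleton _⟩⟩
    · rcases fw_eq_of_counts a c sE hac hA hC with h | h | h | h | h <;> rw [h]
      · simp [List.Chain']
      · exact List.isChain_cons_cons.2 ⟨hac.symm, List.isChain_singleton _⟩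
      · exact absurd (mem_fw (show c ∈ fw a c sE by rw [h]; simp)).2 hcm
      · exact absurd (mem_fw (show c ∈ fw a c sE by rw [h]; simp)).2 hcm
      · exact absurd (mem_fw (show c ∈ fw a c sE by rw [h]; simp)).2 hcm
  | cons s P ih =>
    intro sE hP hA hB hC h1 h2
    simp only [List.flatten_cons, List.append_assoc] at h1 h2 ⊢
    rw [fw_append] at h1 h2 ⊢
    obtain ⟨ha1, hb1, hc1⟩ := hP s (by simp)
    have hfab : fw a b s = [a, b] := by
      rcases fw_pair_of_counts hab ha1 hb1 with h | h
      · exact h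
      · exfalso; rw [h] at h1
        simp only [List.cons_append, List.nil_append] at h1
        exact (List.isChain_cons_cons.1 h1).1 rfl
    have hfbc : fw b c s = [b, c] := by
      rcases fw_pair_of_counts hbc hb1 hc1 with h | h
      · exact h
      · exfalso; rw [h] at h2
        simp only [List.cons_append, List.nil_append] at h2
        exact (List.isChain_cons_cons.1 h2).1 rfl
    have h1' : List.Chain' (· ≠ ·) (b :: fw a b (P.flatten ++ sE)) := by
      rw [hfab] at h1
      simp only [List.cons_append, List.nil_append] at h1
      exact chain_drop2 h1
    have h2' : List.Chain' (· ≠ ·) (c :: fw b c (P.flatten ++ sE)) := by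
      rw [hfbc] at h2
      simp only [List.cons_append, List.nil_append] at h2
      exact chain_drop2 h2
    have ih' := ih sE (fun t ht => hP t (by simp [ht])) hA hB hC h1' h2'
    have hfac := perm3 hab hac hbc s ha1 hb1 hc1 hfab hfbc
    rw [hfac]
    simp only [List.cons_append, List.nil_append]
    exact List.isChain_cons_cons.2 ⟨hac.symm, List.isChain_cons_cons.2 ⟨hac, ih'⟩⟩

end S15Z

namespace S15W
open S15 S15X S15Y S15Z
variable {V : Type*} [DecidableEq V]

/-- main combinatorial core: transitivity of the orientation, on a decomposed word -/
lemma core' {a b c : V} (hab : a ≠ b) (hac : a ≠ c) (hbc : b ≠ c)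
    (s0 s1 : List V) (P' : List (List V)) (sE : List V)
    (h0a : s0.count a ≤ 1) (h0b : s0.count b ≤ 1) (h0c : s0.count c ≤ 1)
    (h1a : s1.count a = 1) (h1b : s1.count b = 1) (h1c : s1.count c = 1)
    (hP : ∀ s ∈ P', s.count a = 1 ∧ s.count b = 1 ∧ s.count c = 1)
    (hEa : sE.count a ≤ 1) (hEb : sE.count b ≤ 1) (hEc : sE.count c ≤ 1)
    (hchab : List.Chain' (· ≠ ·) (fw a b (s0 ++ s1 ++ (P'.flatten ++ sE))))
    (hchbc : List.Chain' (· ≠ ·) (fw b c (s0 ++ s1 ++ (P'.flatten ++ sE))))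
    (hw1 : fw a b s1 = [a, b]) (hw2 : fw b c s1 = [b, c]) :
    List.Chain' (· ≠ ·) (fw a c (s0 ++ s1 ++ (P'.flatten ++ sE))) ∧ fw a c s1 = [a, c] := by
  have hfac1 : fw a c s1 = [a, c] := perm3 hab hac hbc s1 h1a h1b h1c hw1 hw2
  simp only [List.append_assoc, fw_append] at hchab hchbc ⊢
  rw [hw1] at hchab
  rw [hw2] at hchbc
  -- decompose the ab-chain
  unfold List.Chain' at hchab hchbc
  rw [List.isChain_append] at hchab hchbc
  obtain ⟨hch0ab, hchab2, hjab⟩ := hchab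
  obtain ⟨hch0bc, hchbc2, hjbc⟩ := hchbc
  simp only [List.cons_append, List.nil_append] at hchab2 hchbc2
  have htab : List.Chain' (· ≠ ·) (b :: fw a b (P'.flatten ++ sE)) := by
    have := (List.isChain_cons_cons.1 hchab2).2
    rwa [fw_append]
  have htbc : List.Chain' (· ≠ ·) (c :: fw b c (P'.flatten ++ sE)) := by
    have := (List.isChain_cons_cons.1 hchbc2).2
    rwa [fw_append]
  have hind := ind_main hab hac hbc P' sE hP hEa hEb hEc htab htbc
  -- boundary analysis for s0
  have hbound : fw a c s0 = [] ∨ fw a c s0 = [c] ∨ fw a c s0 = [a, c] := by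
    by_cases ham : a ∈ s0
    · have hfab0 : fw a b s0 = [a, b] := by
        rcases fw_eq_of_counts a b s0 hab h0a h0b with h | h | h | h | h
        · exfalso; have := mem_fw_left (v := b) ham; rw [h] at this; simp at this
        · exfalso
          have hj := hjab a (by rw [h]; rfl) a (by simp)
          exact hj rfl
        · exfalso; have := mem_fw_left (v := b) ham; rw [h] at this
          simp [hab] at this
        · exact h
        · exfalso
          have hj := hjab a (by rw [h]; rfl) a (by simp)
          exact hj rfl
      have hbm : b ∈ s0 := (mem_fw (show b ∈ fw a b s0 by rw [hfab0]; simp)).2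
      have hfbc0 : fw b c s0 = [b, c] := by
        rcases fw_eq_of_counts b c s0 hbc h0b h0c with h | h | h | h | h
        · exfalso; have := mem_fw_left (v := c) hbm; rw [h] at this; simp at this
        · exfalso
          have hj := hjbc b (by rw [h]; rfl) b (by simp)
          exact hj rfl
        · exfalso; have := mem_fw_left (v := c) hbm; rw [h] at this
          simp [hbc] at this
        · exact h
        · exfalso
          have hj := hjbc b (by rw [h]; rfl) b (by simp)
          exact hj rfl
      have hcm : c ∈ s0 := (mem_fw (show c ∈ fw b c s0 by rw [hfbc0]; simp)).2
      right; right
      exact perm3 hab hac hbc s0 (count_eq_one_of_mem ham h0a)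
        (count_eq_one_of_mem hbm h0b) (count_eq_one_of_mem hcm h0c) hfab0 hfbc0
    · rcases fw_eq_of_counts a c s0 hac h0a h0c with h | h | h | h | h
      · exact Or.inl h
      · exact absurd (mem_fw (show a ∈ fw a c s0 by rw [h]; simp)).2 ham
      · exact Or.inr (Or.inl h)
      · exact absurd (mem_fw (show a ∈ fw a c s0 by rw [h]; simp)).2 ham
      · exact absurd (mem_fw (show a ∈ fw a c s0 by rw [h]; simp)).2 ham
  refine ⟨?_, hfac1⟩
  rw [hfac1]
  have htail : List.Chain' (· ≠ ·) (a :: c :: (fw a c P'.flatten ++ fw a c sE)) := by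
    have := List.isChain_cons_cons.2 (⟨hac, hind⟩ :
      (a ≠ c) ∧ List.Chain' (· ≠ ·) (c :: fw a c (P'.flatten ++ sE)))
    rwa [fw_append] at this
  rcases hbound with h | h | h <;> rw [h]
  · simpa using htail
  · unfold List.Chain' at htail ⊢
    rw [List.isChain_append]
    refine ⟨List.isChain_singleton _, by simpa using htail, ?_⟩
    intro p hp q hq
    simp only [List.getLast?_singleton, Option.mem_some_iff] at hp
    simp only [List.cons_append, List.nil_append, List.head?_cons, Option.mem_some_iff] at hq
    subst hp; subst hq; exact hac.symm
  · unfold List.Chain' at htail ⊢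
    rw [List.isChain_append]
    refine ⟨List.isChain_cons_cons.2 ⟨hac, List.isChain_singleton _⟩, by simpa using htail, ?_⟩
    intro p hp q hq
    simp only [List.cons_append, List.nil_append, List.head?_cons, Option.mem_some_iff] at hq
    have hp' : c = p := by simpa using hp
    subst hp'; subst hq; exact hac.symm
end S15W

namespace S15F
open S15 S15X S15Y S15Z S15W
variable {V : Type*} [DecidableEq V]

lemma dropWhile_spec {x : V} : ∀ (s : List V), x ∉ s → ∀ R : List V,
    (s ++ x :: R).dropWhile (· ≠ x) = x :: R := by
  intro s
  induction s with
  | nil => intro _ R; simp [List.dropWhile]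
  | cons y s ih =>
    intro h R
    have hy : y ≠ x := fun e => h (by simp [e])
    rw [List.cons_append, List.dropWhile_cons, if_pos (by simpa using hy)]
    exact ih (fun e => h (by simp [e])) R

lemma fw_flatten (u v : V) (L : List (List V)) :
    fw u v L.flatten = (L.map (fw u v)).flatten := by
  induction L with
  | nil => rfl
  | cons s L ih => simp [fw_append, ih]

lemma fw_xm_shape (x m : V) {s0 R : List V} (hxs0 : x ∉ s0) (w : List V)
    (hw : w = s0 ++ x :: R) (hch : List.Chain' (· ≠ ·) (fw x m w)) :
    s0.count m ≤ 1 ∧ List.Chain' (· ≠ ·) (x :: fw x m R) := by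
  subst hw
  rw [fw_append] at hch
  have hx : fw x m (x :: R) = x :: fw x m R := by rw [fw_cons]; simp
  rw [hx, fw_x_free hxs0] at hch
  constructor
  · exact repl_le_one_head hch
  · exact hch.suffix ⟨List.replicate (s0.count m) m, rfl⟩

/-- word-level core lemma -/
lemma core {w : List V} {x a b c : V}
    (hax : a ≠ x) (hbx : b ≠ x) (hcx : c ≠ x)
    (hab : a ≠ b) (hac : a ≠ c) (hbc : b ≠ c)
    (hx2 : 2 ≤ w.count x)
    (caX : List.Chain' (· ≠ ·) (fw x a w))
    (cbX : List.Chain' (· ≠ ·) (fw x b w))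
    (ccX : List.Chain' (· ≠ ·) (fw x c w))
    (cab : List.Chain' (· ≠ ·) (fw a b w))
    (cbc : List.Chain' (· ≠ ·) (fw b c w))
    (oab : (fw a b (w.dropWhile (· ≠ x))).head? = some a)
    (obc : (fw b c (w.dropWhile (· ≠ x))).head? = some b) :
    List.Chain' (· ≠ ·) (fw a c w) ∧ (fw a c (w.dropWhile (· ≠ x))).head? = some a := by
  obtain ⟨s0, s1, P', sE, hw, hxs0, hxs1, hxP, hxsE⟩ := shape hx2
  set R := ((s1 :: P').map (· ++ [x])).flatten ++ sE with hR
  -- counts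
  have ca := fw_xm_shape x a hxs0 w hw caX
  have cb := fw_xm_shape x b hxs0 w hw cbX
  have cc := fw_xm_shape x c hxs0 w hw ccX
  have hIa := counts_interior (m := a) (x := x) hax (s1 :: P') sE
    (by intro s hs; rcases List.mem_cons.1 hs with rfl | hs; exacts [hxs1, hxP s hs]) hxsE ca.2
  have hIb := counts_interior (m := b) (x := x) hbx (s1 :: P') sE
    (by intro s hs; rcases List.mem_cons.1 hs with rfl | hs; exacts [hxs1, hxP s hs]) hxsE cb.2
  have hIc := counts_interior (m := c) (x := x) hcx (s1 :: P') sE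
    (by intro s hs; rcases List.mem_cons.1 hs with rfl | hs; exacts [hxs1, hxP s hs]) hxsE cc.2
  have h1a : s1.count a = 1 := hIa.1 s1 (by simp)
  have h1b : s1.count b = 1 := hIb.1 s1 (by simp)
  have h1c : s1.count c = 1 := hIc.1 s1 (by simp)
  -- dropWhile
  have hdw : w.dropWhile (· ≠ x) = x :: R := by rw [hw]; exact dropWhile_spec s0 hxs0 R
  -- fw over R
  have hfwR : ∀ u v : V, x ≠ u → x ≠ v →
      fw u v R = fw u v s1 ++ ((P'.map (fw u v)).flatten ++ fw u v sE) := by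
    intro u v hu hv
    rw [hR, fw_join_x hu hv]
    simp
  -- the reorganized word
  have hfww : ∀ u v : V, x ≠ u → x ≠ v →
      fw u v w = fw u v (s0 ++ s1 ++ (P'.flatten ++ sE)) := by
    intro u v hu hv
    rw [hw, fw_append, fw_cons_x hu hv, hfwR u v hu hv]
    simp only [List.append_assoc, fw_append, fw_flatten]
  -- orientation gives the s1 content
  have hoab : fw a b s1 = [a, b] := by
    rcases fw_pair_of_counts hab h1a h1b with h | h
    · exact h
    · exfalso
      rw [hdw, fw_cons_x hax.symm hbx.symm, hfwR a b hax.symm hbx.symm, h] at oab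
      simp at oab
      exact hab oab.symm
  have hobc : fw b c s1 = [b, c] := by
    rcases fw_pair_of_counts hbc h1b h1c with h | h
    · exact h
    · exfalso
      rw [hdw, fw_cons_x hbx.symm hcx.symm, hfwR b c hbx.symm hcx.symm, h] at obc
      simp at obc
      exact hbc obc.symm
  have hmain := core' hab hac hbc s0 s1 P' sE ca.1 cb.1 cc.1 h1a h1b h1c
    (fun s hs => ⟨hIa.1 s (by simp [hs]), hIb.1 s (by simp [hs]), hIc.1 s (by simp [hs])⟩)
    hIa.2 hIb.2 hIc.2
    (by rw [← hfww a b hax.symm hbx.symm]; exact cab)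
    (by rw [← hfww b c hbx.symm hcx.symm]; exact cbc)
    hoab hobc
  constructor
  · rw [hfww a c hax.symm hcx.symm]; exact hmain.1
  · rw [hdw, fw_cons_x hax.symm hcx.symm, hfwR a c hax.symm hcx.symm, hmain.2]
    simp

/-- totality of the orientation on edges -/
lemma orient_total {w : List V} {x a b : V}
    (hax : a ≠ x) (hbx : b ≠ x) (hab : a ≠ b)
    (hx2 : 2 ≤ w.count x)
    (caX : List.Chain' (· ≠ ·) (fw x a w))
    (cbX : List.Chain' (· ≠ ·) (fw x b w)) :
    (fw a b (w.dropWhile (· ≠ x))).head? = some a ∨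
    (fw a b (w.dropWhile (· ≠ x))).head? = some b := by
  obtain ⟨s0, s1, P', sE, hw, hxs0, hxs1, hxP, hxsE⟩ := shape hx2
  set R := ((s1 :: P').map (· ++ [x])).flatten ++ sE with hR
  have ca := fw_xm_shape x a hxs0 w hw caX
  have cb := fw_xm_shape x b hxs0 w hw cbX
  have hIa := counts_interior (m := a) (x := x) hax (s1 :: P') sE
    (by intro s hs; rcases List.mem_cons.1 hs with rfl | hs; exacts [hxs1, hxP s hs]) hxsE ca.2
  have hIb := counts_interior (m := b) (x := x) hbx (s1 :: P') sE
    (by intro s hs; rcases List.mem_cons.1 hs with rfl | hs; exacts [hxs1, hxP s hs]) hxsE cb.2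
  have h1a : s1.count a = 1 := hIa.1 s1 (by simp)
  have h1b : s1.count b = 1 := hIb.1 s1 (by simp)
  have hdw : w.dropWhile (· ≠ x) = x :: R := by rw [hw]; exact dropWhile_spec s0 hxs0 R
  rw [hdw, fw_cons_x hax.symm hbx.symm, hR, fw_join_x hax.symm hbx.symm]
  simp only [List.map_cons, List.flatten_cons, List.append_assoc]
  rcases fw_pair_of_counts hab h1a h1b with h | h <;> rw [h]
  · left; simp
  · right; simp

end S15F

namespace S15D
open S15
variable {V : Type*} [DecidableEq V]

lemma filter_dedup (p : V → Bool) : ∀ l : List V, l.dedup.filter p = (l.filter p).dedup := by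
  intro l
  induction l with
  | nil => rfl
  | cons y l ih =>
    by_cases hmem : y ∈ l
    · rw [List.dedup_cons_of_mem hmem]
      by_cases hp : p y
      · rw [List.filter_cons_of_pos hp, List.dedup_cons_of_mem (List.mem_filter.2 ⟨hmem, hp⟩)]
        exact ih
      · rw [List.filter_cons_of_neg (by simpa using hp)]
        exact ih
    · rw [List.dedup_cons_of_notMem hmem]
      by_cases hp : p y
      · rw [List.filter_cons_of_pos hp, List.filter_cons_of_pos hp,
          List.dedup_cons_of_notMem (fun hm => hmem (List.mem_filter.1 hm).1)]
        rw [ih]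
      · rw [List.filter_cons_of_neg (by simpa using hp), List.filter_cons_of_neg (by simpa using hp)]
        exact ih

lemma getLast?_dedup : ∀ l : List V, l.dedup.getLast? = l.getLast? := by
  intro l
  induction l with
  | nil => rfl
  | cons y l ih =>
    match l, ih with
    | [], _ => simp
    | z :: t, ih =>
      rw [List.getLast?_cons_cons]
      by_cases hmem : y ∈ z :: t
      · rw [List.dedup_cons_of_mem hmem]
        exact ih
      · rw [List.dedup_cons_of_notMem hmem]
        have hne : (z :: t).dedup ≠ [] := by
          simp [List.dedup_eq_nil]
        match hd : (z :: t).dedup, hne, ih with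
        | q :: r, _, ih => rw [List.getLast?_cons_cons]; exact ih

lemma chain_append_dedup {a b : V} (hab : a ≠ b) {l : List V}
    (ha : a ∈ l) (hb : b ∈ l) :
    List.Chain' (· ≠ ·) (l ++ l.dedup) ↔ List.Chain' (· ≠ ·) l := by
  unfold List.Chain'
  rw [List.isChain_append]
  constructor
  · tauto
  · intro hl
    refine ⟨hl, ?_, ?_⟩
    · exact (List.nodup_dedup l).isChain
    · intro p hp q hq
      -- q is the head of dedup l, p is the last of l (= last of dedup l)
      match hd : l.dedup, hq with
      | z :: t, hq =>
        have hql : q = z := by have := hq; simp at this; exact this.symm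
        have hnodup := List.nodup_dedup l
        rw [hd] at hnodup
        have hzt : z ∉ t := (List.nodup_cons.1 hnodup).1
        have hpd : p ∈ (z :: t).getLast? := by
          rw [← hd, getLast?_dedup]; exact hp
        have htne : t ≠ [] := by
          rintro rfl
          -- dedup l = [z] but a and b are both in dedup l
          have ha' : a ∈ l.dedup := List.mem_dedup.2 ha
          have hb' : b ∈ l.dedup := List.mem_dedup.2 hb
          rw [hd] at ha' hb'
          simp at ha' hb'
          exact hab (ha'.trans hb'.symm)
        have hpt : p ∈ t := by
          match ht : t, htne, hpd with
          | u :: s, _, hpd =>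
            have : p ∈ (u :: s).getLast? := by
              rw [List.getLast?_cons_cons] at hpd; exact hpd
            obtain ⟨hne, he⟩ := List.mem_getLast?_eq_getLast this
            rw [he]; exact List.getLast_mem hne
        subst hql
        exact fun e => hzt (e ▸ hpt)

end S15D



namespace S15G
open S15 S15F S15D
variable {V : Type*} [DecidableEq V]

lemma represents_append_dedup {G : SimpleGraph V} {w : List V} (h : Represents w G) :
    Represents (w ++ w.dedup) G := by
  obtain ⟨hmem, hadj⟩ := h
  refine ⟨fun v => by simp [hmem v], fun a b hab => ?_⟩
  rw [hadj a b hab]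
  show List.Chain' (· ≠ ·) (fw a b w) ↔ List.Chain' (· ≠ ·) (fw a b (w ++ w.dedup))
  have heq : fw a b (w ++ w.dedup) = fw a b w ++ (fw a b w).dedup := by
    rw [fw_append]
    unfold fw
    rw [filter_dedup]
  rw [heq]
  exact (chain_append_dedup hab (S15Z.mem_fw_left (hmem a)) (S15Z.mem_fw_right (hmem b))).symm

lemma exists_dominating {G : SimpleGraph V} (hc : G.Connected) {M : Set V}
    (hmod : IsModule G M) (hM : M.Nonempty) (hne : M ≠ Set.univ) :
    ∃ x, x ∉ M ∧ ∀ m ∈ M, G.Adj x m := by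
  obtain ⟨m0, hm0⟩ := hM
  have hy : ∃ y, y ∉ M := by
    by_contra hcon
    push_neg at hcon
    exact hne (Set.eq_univ_iff_forall.2 hcon)
  obtain ⟨y, hy⟩ := hy
  obtain ⟨p⟩ := hc.preconnected m0 y
  have key : ∀ (u v : V) (_ : G.Walk u v), u ∈ M → v ∉ M →
      ∃ s t, s ∈ M ∧ t ∉ M ∧ G.Adj s t := by
    intro u v p
    induction p with
    | nil => intro h1 h2; exact absurd h1 h2
    | @cons u u' v h p ih =>
      intro h1 h2
      by_cases hm : u' ∈ M
      · exact ih hm h2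
      · exact ⟨u, u', h1, hm, h⟩
  obtain ⟨s, t, hs, ht, hadj⟩ := key m0 y p hm0 hy
  refine ⟨t, ht, ?_⟩
  rcases hmod t ht with hall | hnone
  · exact hall
  · exact absurd hadj.symm (hnone s hs)

theorem stmt15' {V : Type*} [DecidableEq V] [Fintype V] (G : SimpleGraph V)
    (hc : G.Connected) (h : WordRepresentable G) (M : Set V)
    (hmod : IsModule G M) (h2 : 2 ≤ M.ncard) (hne : M ≠ Set.univ) :
    IsComparability (G.induce M) := by
  classical
  obtain ⟨w0, hw0⟩ := h
  have hrep := represents_append_dedup hw0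
  set w : List V := w0 ++ w0.dedup with hwdef
  have hM : M.Nonempty := Set.nonempty_of_ncard_ne_zero (by omega)
  obtain ⟨x, hxM, hxadj⟩ := exists_dominating hc hmod hM hne
  have hx2 : 2 ≤ w.count x := by
    rw [hwdef, List.count_append]
    have h1 : 0 < w0.count x := List.count_pos_iff.mpr (hw0.1 x)
    have h2 : 0 < w0.dedup.count x := List.count_pos_iff.mpr (List.mem_dedup.2 (hw0.1 x))
    omega
  have alt : ∀ u v : V, u ≠ v → (G.Adj u v ↔ List.Chain' (· ≠ ·) (fw u v w)) :=
    fun u v huv => hrep.2 u v huv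
  have altx : ∀ m ∈ M, List.Chain' (· ≠ ·) (fw x m w) :=
    fun m hm => (alt x m (fun e => hxM (e ▸ hm))).1 (hxadj m hm)
  refine ⟨fun A B => (G.induce M).Adj A B ∧
    (fw A.1 B.1 (w.dropWhile (· ≠ x))).head? = some A.1, ?_, ?_, ?_⟩
  · rintro ⟨a, haM⟩ ⟨b, hbM⟩ ⟨c, hcM⟩ ⟨hAB, oab⟩ ⟨hBC, obc⟩
    have hab : G.Adj a b := hAB
    have hbc : G.Adj b c := hBC
    have hax : a ≠ x := fun e => hxM (e ▸ haM)
    have hbx : b ≠ x := fun e => hxM (e ▸ hbM)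
    have hcx : c ≠ x := fun e => hxM (e ▸ hcM)
    have hac : a ≠ c := by
      rintro rfl
      rw [fw_comm] at obc
      rw [oab] at obc
      exact hab.ne (by simpa using obc)
    have hcore := core (w := w) hax hbx hcx hab.ne hac hbc.ne hx2
      (altx a haM) (altx b hbM) (altx c hcM)
      ((alt a b hab.ne).1 hab) ((alt b c hbc.ne).1 hbc) oab obc
    have hadj : G.Adj a c := (alt a c hac).2 hcore.1
    exact ⟨hadj, hcore.2⟩
  · rintro A B ⟨hAB, _⟩; exact hAB
  · rintro ⟨a, haM⟩ ⟨b, hbM⟩ hAB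
    have hab : G.Adj a b := hAB
    have hax : a ≠ x := fun e => hxM (e ▸ haM)
    have hbx : b ≠ x := fun e => hxM (e ▸ hbM)
    constructor
    · rintro ⟨_, oab⟩ ⟨_, oba⟩
      rw [fw_comm, oab] at oba
      exact hab.ne (by simpa using oba)
    · intro hn
      refine ⟨hAB, ?_⟩
      rcases orient_total hax hbx hab.ne hx2 (altx a haM) (altx b hbM) with hh | hh
      · exact hh
      · exact absurd ⟨hAB.symm, by rw [fw_comm]; exact hh⟩ hn

end S15G

/-- in a connected word-representable graph, every non-trivial module induces
a comparability graph. -/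
theorem stmt15 {V : Type*} [DecidableEq V] [Fintype V] (G : SimpleGraph V)
    (hc : G.Connected) (h : WordRepresentable G) (M : Set V)
    (hmod : IsModule G M) (h2 : 2 ≤ M.ncard) (hne : M ≠ Set.univ) :
    IsComparability (G.induce M) :=
  S15G.stmt15' G hc h M hmod h2 hne
end
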